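/- arXiv:2408.16973 — 7 statements merged into one kernel-verified Lean document; each statement's English description precedes it below -/
import Mathlib

section
/- Let m ≥ 1 be an integer, and for r > 0 set h₁^m(r) = 2r^m/(r^{2m}+1), h₃^m(r) = (r^{2m}−1)/(r^{2m}+1). Define the first-order operators L_m f = f′ + (m h₃^m/r) f and L_m* f = −f′ + ((m h₃^m − 1)/r) f. Then for every twice differentiable function f : (0,∞) → ℂ and every r > 0: L_m*(L_m f)(r) = −f″(r) − (1/r) f′(r) + (m²/r²)(1 − 2 (h₁^m(r))²) f(r). That is, H_m = L_m* L_m. -/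
open Set

/-- The factorization `H_m = L_m* L_m` of the linearized operator around the
`m`-equivariant harmonic map ground state. -/
theorem H_factorization (m : ℕ) (hm : 1 ≤ m) (f : ℝ → ℂ)
    (hf : ∀ s ∈ Ioi (0:ℝ), DifferentiableAt ℝ f s)
    (hf' : ∀ s ∈ Ioi (0:ℝ), DifferentiableAt ℝ (deriv f) s)
    (r : ℝ) (hr : 0 < r) :
    let h1 : ℝ → ℝ := fun s => 2*s^m/(s^(2*m)+1)
    let h3 : ℝ → ℝ := fun s => (s^(2*m)-1)/(s^(2*m)+1)
    let L : (ℝ → ℂ) → ℝ → ℂ := fun g s => deriv g s + (((m:ℝ) * h3 s / s : ℝ) : ℂ) * g s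
    let Lstar : (ℝ → ℂ) → ℝ → ℂ :=
      fun g s => - deriv g s + ((((m:ℝ) * h3 s - 1) / s : ℝ) : ℂ) * g s
    Lstar (L f) r
      = - deriv (deriv f) r - (1/(r:ℂ)) * deriv f r
        + ((((m:ℝ)^2/r^2) * (1 - 2*(h1 r)^2) : ℝ) : ℂ) * f r := by
  intro h1 h3 L Lstar
  have hrne : r ≠ 0 := ne_of_gt hr
  have hD : r^(2*m) + 1 ≠ 0 := by positivity
  have hpow : HasDerivAt (fun s : ℝ => s^(2*m)) (((2*m : ℕ) : ℝ) * r^(2*m-1)) r :=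
    hasDerivAt_pow _ _
  set a : ℝ := ((2*m : ℕ) : ℝ) * r^(2*m-1) with ha
  have hh3 : HasDerivAt h3
      ((a * (r^(2*m)+1) - (r^(2*m)-1) * a) / (r^(2*m)+1)^2) r := by
    simpa using (hpow.sub_const 1).fun_div (hpow.add_const 1) hD
  have hc : HasDerivAt (fun s : ℝ => (m:ℝ) * h3 s / s)
      (((m:ℝ) * ((a * (r^(2*m)+1) - (r^(2*m)-1) * a) / (r^(2*m)+1)^2) * r
        - (m:ℝ) * h3 r * 1) / r^2) r := by
    simpa using (hh3.const_mul (m:ℝ)).fun_div (hasDerivAt_id r) hrne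
  have hcC : HasDerivAt (fun s : ℝ => (((m:ℝ) * h3 s / s : ℝ) : ℂ))
      ((((m:ℝ) * ((a * (r^(2*m)+1) - (r^(2*m)-1) * a) / (r^(2*m)+1)^2) * r
        - (m:ℝ) * h3 r * 1) / r^2 : ℝ) : ℂ) r := hc.ofReal_comp
  have hprod : HasDerivAt (fun s : ℝ => (((m:ℝ) * h3 s / s : ℝ) : ℂ) * f s)
      ((((m:ℝ) * ((a * (r^(2*m)+1) - (r^(2*m)-1) * a) / (r^(2*m)+1)^2) * r
        - (m:ℝ) * h3 r * 1) / r^2 : ℝ) * f r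
        + (((m:ℝ) * h3 r / r : ℝ) : ℂ) * deriv f r) r :=
    hcC.mul (hf r hr).hasDerivAt
  have hderivL : deriv (L f) r
      = deriv (deriv f) r
        + ((((m:ℝ) * ((a * (r^(2*m)+1) - (r^(2*m)-1) * a) / (r^(2*m)+1)^2) * r
        - (m:ℝ) * h3 r * 1) / r^2 : ℝ) * f r
        + (((m:ℝ) * h3 r / r : ℝ) : ℂ) * deriv f r) := by
    have := deriv_fun_add (hf' r hr) hprod.differentiableAt
    rw [show L f = fun s => deriv f s + (((m:ℝ) * h3 s / s : ℝ) : ℂ) * f s from rfl]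
    rw [this, hprod.deriv]
  have hpow21 : r^(2*m-1) = r^(2*m) / r := by
    rw [eq_div_iff hrne, ← pow_succ]
    congr 1
    omega
  have hDC : ((r:ℂ))^(2*m) + 1 ≠ 0 := by
    intro h
    apply hD
    have : ((r^(2*m) + 1 : ℝ) : ℂ) = 0 := by push_cast; exact h
    exact_mod_cast this
  have hrC : (r:ℂ) ≠ 0 := Complex.ofReal_ne_zero.2 hrne
  have hsq : r^(2*m) = r^m * r^m := by rw [two_mul, pow_add]
  have hB : ((m:ℝ)^2/r^2) * (1 - 2*(h1 r)^2)
      = -(((m:ℝ) * ((a * (r^(2*m)+1) - (r^(2*m)-1) * a) / (r^(2*m)+1)^2) * r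
          - (m:ℝ) * h3 r * 1) / r^2)
        + (((m:ℝ) * h3 r - 1) / r) * ((m:ℝ) * h3 r / r) := by
    simp only [h1, h3, ha, hpow21, hsq]
    have hD' : r * r^m * (r^m) + 1 ≠ 0 := by positivity
    field_simp
    push_cast
    ring
  show - deriv (L f) r + ((((m:ℝ) * h3 r - 1) / r : ℝ) : ℂ) * (L f) r
      = - deriv (deriv f) r - (1/(r:ℂ)) * deriv f r
        + ((((m:ℝ)^2/r^2) * (1 - 2*(h1 r)^2) : ℝ) : ℂ) * f r
  rw [hderivL, show ((((m:ℝ)^2/r^2) * (1 - 2*(h1 r)^2) : ℝ) : ℂ)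
      = ((-(((m:ℝ) * ((a * (r^(2*m)+1) - (r^(2*m)-1) * a) / (r^(2*m)+1)^2) * r
          - (m:ℝ) * h3 r * 1) / r^2)
        + (((m:ℝ) * h3 r - 1) / r) * ((m:ℝ) * h3 r / r) : ℝ) : ℂ) from by rw [← hB]]
  show - (deriv (deriv f) r + _) + _ * (deriv f r + (((m:ℝ) * h3 r / r : ℝ) : ℂ) * f r) = _
  push_cast
  ring
end

section
/- Let m ≥ 1 be an integer, and for r > 0 set h₁^m(r) = 2r^m/(r^{2m}+1), h₃^m(r) = (r^{2m}−1)/(r^{2m}+1). Define L_m f = f′ + (m h₃^m/r) f and L_m* f = −f′ + ((m h₃^m − 1)/r) f. Then for every twice differentiable function f : (0,∞) → ℂ and every r > 0: L_m(L_m* f)(r) = −f″(r) − (1/r) f′(r) + ((1 + m² − 2 m h₃^m(r))/r²) f(r). That is, the conjugate operator H̃_m = L_m L_m* has potential Ṽ_m(r) = (1 + m² − 2 m h₃^m(r))/r². -/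
open Set

/-- The conjugate operator `H̃_m = L_m L_m*` has potential `(1 + m² − 2m h₃^m)/r²`. -/
theorem Htilde_factorization (m : ℕ) (hm : 1 ≤ m) (f : ℝ → ℂ)
    (hf : ∀ s ∈ Ioi (0:ℝ), DifferentiableAt ℝ f s)
    (hf' : ∀ s ∈ Ioi (0:ℝ), DifferentiableAt ℝ (deriv f) s)
    (r : ℝ) (hr : 0 < r) :
    let h3 : ℝ → ℝ := fun s => (s^(2*m)-1)/(s^(2*m)+1)
    let L : (ℝ → ℂ) → ℝ → ℂ := fun g s => deriv g s + (((m:ℝ) * h3 s / s : ℝ) : ℂ) * g s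
    let Lstar : (ℝ → ℂ) → ℝ → ℂ :=
      fun g s => - deriv g s + ((((m:ℝ) * h3 s - 1) / s : ℝ) : ℂ) * g s
    L (Lstar f) r
      = - deriv (deriv f) r - (1/(r:ℂ)) * deriv f r
        + (((1 + (m:ℝ)^2 - 2*(m:ℝ)*h3 r)/r^2 : ℝ) : ℂ) * f r := by
  intro h3 L Lstar
  obtain ⟨k, hk⟩ : ∃ k, 2*m = k+1 := ⟨2*m-1, by omega⟩
  have hr0 : r ≠ 0 := ne_of_gt hr
  have hk' : ((k:ℝ)+1) = 2*(m:ℝ) := by exact_mod_cast hk.symm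
  have hden : (r:ℝ)^(2*m) + 1 ≠ 0 := by positivity
  have hdenk : (r:ℝ)^(k+1) + 1 ≠ 0 := by positivity
  -- derivative of numerator and denominator of h3
  have h1 : HasDerivAt (fun s:ℝ => s^(2*m) - 1) (2*(m:ℝ)*r^k) r := by
    rw [hk]
    have := (hasDerivAt_pow (k+1) r).sub_const 1
    simp only [Nat.add_sub_cancel, Nat.cast_add, Nat.cast_one] at this
    rwa [hk'] at this
  have h2 : HasDerivAt (fun s:ℝ => s^(2*m) + 1) (2*(m:ℝ)*r^k) r := by
    rw [hk]
    have := (hasDerivAt_pow (k+1) r).add_const 1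
    simp only [Nat.add_sub_cancel, Nat.cast_add, Nat.cast_one] at this
    rwa [hk'] at this
  have hh3 : HasDerivAt h3
      ((2*(m:ℝ)*r^k * (r^(2*m)+1) - (r^(2*m)-1) * (2*(m:ℝ)*r^k)) / (r^(2*m)+1)^2) r :=
    h1.div h2 hden
  -- real derivative of g s = (m * h3 s - 1)/s
  set c : ℝ := (2*(m:ℝ)*r^k * (r^(2*m)+1) - (r^(2*m)-1) * (2*(m:ℝ)*r^k)) / (r^(2*m)+1)^2
    with hc
  have hg : HasDerivAt (fun s:ℝ => ((m:ℝ) * h3 s - 1)/s)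
      (((m:ℝ)*c * r - ((m:ℝ)*h3 r - 1) * 1)/r^2) r :=
    ((hh3.const_mul ((m:ℝ))).sub_const 1).div (hasDerivAt_id' r) hr0
  have hG : HasDerivAt (fun s:ℝ => (((((m:ℝ) * h3 s - 1)/s : ℝ)) : ℂ))
      ((((((m:ℝ)*c * r - ((m:ℝ)*h3 r - 1) * 1)/r^2 : ℝ)) : ℂ)) r := hg.ofReal_comp
  have hfd : HasDerivAt f (deriv f r) r := (hf r hr).hasDerivAt
  have hfd' : HasDerivAt (deriv f) (deriv (deriv f) r) r := (hf' r hr).hasDerivAt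
  have hLs : HasDerivAt (Lstar f)
      (-(deriv (deriv f) r)
        + (((((((m:ℝ)*c * r - ((m:ℝ)*h3 r - 1) * 1)/r^2 : ℝ)) : ℂ)) * f r
          + ((((m:ℝ) * h3 r - 1)/r : ℝ) : ℂ) * deriv f r)) r :=
    hfd'.neg.add (hG.mul hfd)
  have hd := hLs.deriv
  -- coefficient identities over ℝ
  set A : ℝ := ((m:ℝ)*c * r - ((m:ℝ)*h3 r - 1) * 1)/r^2 with hA0
  set B : ℝ := ((m:ℝ) * h3 r - 1)/r with hB0
  set C : ℝ := (m:ℝ) * h3 r / r with hC0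
  have hh3r : h3 r = (r^(k+1)-1)/(r^(k+1)+1) := by
    show (r^(2*m)-1)/(r^(2*m)+1) = _
    rw [hk]
  have hB : B - C = -(1/r) := by
    rw [hB0, hC0]
    field_simp
    ring
  have hA : A + C * B = (1 + (m:ℝ)^2 - 2*(m:ℝ)*h3 r)/r^2 := by
    rw [hA0, hB0, hC0, hc, hh3r, hk]
    field_simp
    ring
  have hBc : (B:ℂ) - (C:ℂ) = -(1/(r:ℂ)) := by
    have := congrArg (fun t : ℝ => (t : ℂ)) hB
    push_cast at this
    exact this
  have hAc : (A:ℂ) + (C:ℂ) * (B:ℂ)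
      = (((1 + (m:ℝ)^2 - 2*(m:ℝ)*h3 r)/r^2 : ℝ) : ℂ) := by
    have := congrArg (fun t : ℝ => (t : ℂ)) hA
    push_cast at this
    push_cast
    exact this
  show deriv (Lstar f) r + ((C : ℝ) : ℂ) * Lstar f r = _
  rw [hd]
  have hLsr : Lstar f r = - deriv f r + ((B : ℝ) : ℂ) * f r := rfl
  rw [hLsr]
  show -(deriv (deriv f) r) + (((A:ℝ):ℂ) * f r + ((B:ℝ):ℂ) * deriv f r)
        + ((C:ℝ):ℂ) * (- deriv f r + ((B:ℝ):ℂ) * f r)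
      = - deriv (deriv f) r - (1/(r:ℂ)) * deriv f r
        + (((1 + (m:ℝ)^2 - 2*(m:ℝ)*h3 r)/r^2 : ℝ) : ℂ) * f r
  linear_combination (f r) * hAc + (deriv f r) * hBc
end

section
/- For r > 0 let h₁(r) = 2r²/(r⁴+1), let H be the operator (Hf)(r) = −f″(r) − (1/r) f′(r) + (4/r²)(1 − 2 h₁(r)²) f(r), and define θ₀(r) = (−r⁸ + r⁴ − 8 r⁴ log r + 1)/(8 (r⁶ + r²)). Then H θ₀ = 0 on (0,∞), and the Wronskian normalization r ( h₁′(r) θ₀(r) − h₁(r) θ₀′(r) ) = 1 holds for every r > 0. -/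
open Set

private lemma hden (r : ℝ) (hr : 0 < r) : (8:ℝ)*(r^6+r^2) ≠ 0 := by positivity

private lemma h1_deriv (r : ℝ) (hr : 0 < r) :
    HasDerivAt (fun x : ℝ => 2*x^2/(x^4+1))
      ((4*r*(r^4+1) - 2*r^2*(4*r^3))/(r^4+1)^2) r := by
  have hg : (r:ℝ)^4 + 1 ≠ 0 := by positivity
  have h := (((hasDerivAt_pow 2 r).const_mul 2).fun_div
      ((hasDerivAt_pow 4 r).add_const 1) hg)
  convert! h using 1
  push_cast; ring

private lemma theta_deriv (r : ℝ) (hr : 0 < r) :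
    HasDerivAt (fun x : ℝ => (-x^8 + x^4 - 8*x^4*Real.log x + 1)/(8*(x^6+x^2)))
      (((-8*r^7+4*r^3-(32*r^3*Real.log r+8*r^3))*(8*(r^6+r^2))
          - (-r^8+r^4-8*r^4*Real.log r+1)*(8*(6*r^5+2*r)))/(8*(r^6+r^2))^2) r := by
  have hlog := Real.hasDerivAt_log hr.ne'
  have hN : HasDerivAt (fun x : ℝ => -x^8 + x^4 - 8*x^4*Real.log x + 1)
      (-8*r^7+4*r^3-(32*r^3*Real.log r+8*r^3)) r := by
    have h := (((hasDerivAt_pow 8 r).fun_neg.fun_add (hasDerivAt_pow 4 r)).fun_sub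
        (((hasDerivAt_pow 4 r).const_mul 8).fun_mul hlog)).add_const 1
    convert! h using 1
    push_cast; field_simp; ring
  have hD : HasDerivAt (fun x : ℝ => 8*(x^6+x^2)) (8*(6*r^5+2*r)) r := by
    have h := ((hasDerivAt_pow 6 r).fun_add (hasDerivAt_pow 2 r)).const_mul 8
    convert! h using 1
    push_cast; ring
  exact hN.div hD (hden r hr)

private lemma theta_deriv2 (r : ℝ) (hr : 0 < r) :
    HasDerivAt (fun x : ℝ =>
        ((-8*x^7+4*x^3-(32*x^3*Real.log x+8*x^3))*(8*(x^6+x^2))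
          - (-x^8+x^4-8*x^4*Real.log x+1)*(8*(6*x^5+2*x)))/(8*(x^6+x^2))^2)
      ((((-56*r^6+12*r^2-(96*r^2*Real.log r+32*r^2+24*r^2))*(8*(r^6+r^2))
            + (-8*r^7+4*r^3-(32*r^3*Real.log r+8*r^3))*(8*(6*r^5+2*r))
          - ((-8*r^7+4*r^3-(32*r^3*Real.log r+8*r^3))*(8*(6*r^5+2*r))
            + (-r^8+r^4-8*r^4*Real.log r+1)*(8*(30*r^4+2))))*(8*(r^6+r^2))^2
        - ((-8*r^7+4*r^3-(32*r^3*Real.log r+8*r^3))*(8*(r^6+r^2))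
            - (-r^8+r^4-8*r^4*Real.log r+1)*(8*(6*r^5+2*r)))
           *(2*(8*(r^6+r^2))*(8*(6*r^5+2*r))))/((8*(r^6+r^2))^2)^2) r := by
  have hlog := Real.hasDerivAt_log hr.ne'
  have hN : HasDerivAt (fun x : ℝ => -x^8 + x^4 - 8*x^4*Real.log x + 1)
      (-8*r^7+4*r^3-(32*r^3*Real.log r+8*r^3)) r := by
    have h := (((hasDerivAt_pow 8 r).fun_neg.fun_add (hasDerivAt_pow 4 r)).fun_sub
        (((hasDerivAt_pow 4 r).const_mul 8).fun_mul hlog)).add_const 1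
    convert! h using 1
    push_cast; field_simp; ring
  have hA : HasDerivAt (fun x : ℝ => -8*x^7+4*x^3-(32*x^3*Real.log x+8*x^3))
      (-56*r^6+12*r^2-(96*r^2*Real.log r+32*r^2+24*r^2)) r := by
    have h := (((hasDerivAt_pow 7 r).const_mul (-8)).fun_add
        ((hasDerivAt_pow 3 r).const_mul 4)).fun_sub
        ((((hasDerivAt_pow 3 r).const_mul 32).fun_mul hlog).fun_add
          ((hasDerivAt_pow 3 r).const_mul 8))
    convert! h using 1
    push_cast; field_simp; ring
  have hD : HasDerivAt (fun x : ℝ => 8*(x^6+x^2)) (8*(6*r^5+2*r)) r := by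
    have h := ((hasDerivAt_pow 6 r).fun_add (hasDerivAt_pow 2 r)).const_mul 8
    convert! h using 1
    push_cast; ring
  have hDf : HasDerivAt (fun x : ℝ => 8*(6*x^5+2*x)) (8*(30*r^4+2)) r := by
    have h := (((hasDerivAt_pow 5 r).const_mul 6).fun_add
        ((hasDerivAt_id r).const_mul 2)).const_mul 8
    convert! h using 1
    push_cast; ring
  have hP : HasDerivAt (fun x : ℝ =>
      (-8*x^7+4*x^3-(32*x^3*Real.log x+8*x^3))*(8*(x^6+x^2))
        - (-x^8+x^4-8*x^4*Real.log x+1)*(8*(6*x^5+2*x)))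
      ((-56*r^6+12*r^2-(96*r^2*Real.log r+32*r^2+24*r^2))*(8*(r^6+r^2))
            + (-8*r^7+4*r^3-(32*r^3*Real.log r+8*r^3))*(8*(6*r^5+2*r))
          - ((-8*r^7+4*r^3-(32*r^3*Real.log r+8*r^3))*(8*(6*r^5+2*r))
            + (-r^8+r^4-8*r^4*Real.log r+1)*(8*(30*r^4+2)))) r :=
    (hA.mul hD).sub (hN.mul hDf)
  have hQ : HasDerivAt (fun x : ℝ => (8*(x^6+x^2))^2)
      (2*(8*(r^6+r^2))*(8*(6*r^5+2*r))) r := by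
    have h := hD.fun_pow 2
    convert! h using 1
    push_cast; ring
  have hQne : ((8:ℝ)*(r^6+r^2))^2 ≠ 0 := pow_ne_zero _ (hden r hr)
  exact hP.div hQ hQne

/-- The function `θ₀` is a second zero mode of `H` (singular at the origin), with
Wronskian normalization `r(h₁'θ₀ − h₁θ₀') = 1`. -/
theorem theta0_properties :
    let h1 : ℝ → ℝ := fun r => 2*r^2/(r^4+1)
    let θ : ℝ → ℝ := fun r => (-r^8 + r^4 - 8*r^4*Real.log r + 1)/(8*(r^6+r^2))
    (∀ r ∈ Ioi (0:ℝ),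
        - deriv (deriv θ) r - (1/r) * deriv θ r + (4/r^2)*(1 - 2*(h1 r)^2) * θ r = 0)
      ∧ ∀ r ∈ Ioi (0:ℝ), r * (deriv h1 r * θ r - h1 r * deriv θ r) = 1 := by
  intro h1 θ
  have hθd : ∀ r ∈ Ioi (0:ℝ), deriv θ r
      = ((-8*r^7+4*r^3-(32*r^3*Real.log r+8*r^3))*(8*(r^6+r^2))
          - (-r^8+r^4-8*r^4*Real.log r+1)*(8*(6*r^5+2*r)))/(8*(r^6+r^2))^2 :=
    fun r hr => (theta_deriv r hr).deriv
  constructor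
  · intro r hr
    have hr' : (0:ℝ) < r := hr
    have hev : deriv θ =ᶠ[nhds r] (fun x : ℝ =>
        ((-8*x^7+4*x^3-(32*x^3*Real.log x+8*x^3))*(8*(x^6+x^2))
          - (-x^8+x^4-8*x^4*Real.log x+1)*(8*(6*x^5+2*x)))/(8*(x^6+x^2))^2) :=
      Filter.eventuallyEq_of_mem (isOpen_Ioi.mem_nhds hr') (fun x hx => hθd x hx)
    have h2 : deriv (deriv θ) r = _ := hev.deriv_eq.trans (theta_deriv2 r hr').deriv
    rw [h2, hθd r hr]
    show -_ - (1/r) * _ + (4/r^2)*(1 - 2*(2*r^2/(r^4+1))^2)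
        * ((-r^8 + r^4 - 8*r^4*Real.log r + 1)/(8*(r^6+r^2))) = 0
    have h0 : r ≠ 0 := ne_of_gt hr'
    have h4 : (r:ℝ)^4 + 1 ≠ 0 := by positivity
    have h6 : (r:ℝ)^6 + r^2 ≠ 0 := by positivity
    field_simp
    ring
  · intro r hr
    have hr' : (0:ℝ) < r := hr
    rw [hθd r hr, (h1_deriv r hr').deriv]
    show r * (_ * ((-r^8 + r^4 - 8*r^4*Real.log r + 1)/(8*(r^6+r^2)))
        - 2*r^2/(r^4+1) * _) = 1
    have h0 : r ≠ 0 := ne_of_gt hr'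
    have h4 : (r:ℝ)^4 + 1 ≠ 0 := by positivity
    have h6 : (r:ℝ)^6 + r^2 ≠ 0 := by positivity
    field_simp
    ring
end

section
/- For u > 0 define φ₁(u) = −( 2u² ∫₀^u (2 arctan x)/x dx + (u⁴ − 1) arctan u − 3u³ + u ) / ( 8(u⁴ + u²) ), and for r > 0 let h₁(r) = 2r²/(r⁴+1) and (Hf)(r) = −f″(r) − (1/r) f′(r) + (4/r²)(1 − 2 h₁(r)²) f(r). Then the function g(r) := r² φ₁(r²) satisfies H g = h₁ on (0,∞). -/
open MeasureTheory Set

noncomputable def Fi (u : ℝ) : ℝ := ∫ x in (0:ℝ)..u, 2*Real.arctan x / x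

lemma my_arctan_nonneg {x : ℝ} (h : 0 ≤ x) : 0 ≤ Real.arctan x := by
  have := Real.arctan_strictMono.monotone h
  rwa [Real.arctan_zero] at this

lemma abs_arctan_le_abs (x : ℝ) : |Real.arctan x| ≤ |x| := by
  have key : ∀ y : ℝ, 0 ≤ y → Real.arctan y ≤ y := by
    intro y hy
    calc Real.arctan y ≤ Real.tan (Real.arctan y) :=
          Real.le_tan (my_arctan_nonneg hy) (Real.arctan_lt_pi_div_two y)
      _ = y := Real.tan_arctan y
  rcases le_total 0 x with h | h
  · rw [abs_of_nonneg (my_arctan_nonneg h), abs_of_nonneg h]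
    exact key x h
  · have h' : 0 ≤ -x := by linarith
    have h2 : Real.arctan (-x) ≤ -x := key _ h'
    rw [Real.arctan_neg] at h2
    have h3 : Real.arctan x ≤ 0 := by
      have := Real.arctan_strictMono.monotone h
      rwa [Real.arctan_zero] at this
    rw [abs_of_nonpos h3, abs_of_nonpos h]
    linarith

lemma psi_intervalIntegrable (a b : ℝ) :
    IntervalIntegrable (fun x => 2*Real.arctan x / x) volume a b := by
  apply IntervalIntegrable.mono_fun (intervalIntegrable_const (c := (2:ℝ)))
  · exact ((measurable_const.mul Real.measurable_arctan).div measurable_id).aestronglyMeasurable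
  · filter_upwards with x
    simp only [Real.norm_eq_abs]
    rcases eq_or_ne x 0 with rfl | hx
    · simp
    · rw [abs_div, div_le_iff₀ (abs_pos.mpr hx), abs_mul]
      have h := abs_arctan_le_abs x
      have h2 : |(2:ℝ)| = 2 := by norm_num
      rw [h2]
      nlinarith [abs_nonneg x]

lemma hasDerivAt_Fi {u : ℝ} (hu : 0 < u) : HasDerivAt Fi (2*Real.arctan u / u) u := by
  have hc : ContinuousAt (fun x => 2*Real.arctan x / x) u :=
    ((continuous_const.mul Real.continuous_arctan).continuousAt).div continuousAt_id (ne_of_gt hu)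
  exact intervalIntegral.integral_hasDerivAt_right (psi_intervalIntegrable 0 u)
    (((measurable_const.mul Real.measurable_arctan).div
        measurable_id).stronglyMeasurable.stronglyMeasurableAtFilter)
    hc

lemma hasDerivAt_Fsq {r : ℝ} (hr : 0 < r) :
    HasDerivAt (fun s : ℝ => Fi (s^2)) (4*Real.arctan (r^2)/r) r := by
  have hrne : r ≠ 0 := ne_of_gt hr
  have h2 : HasDerivAt (fun s : ℝ => s^2) (2*r) r := by simpa using hasDerivAt_pow 2 r
  have h : HasDerivAt (Fi ∘ fun s : ℝ => s^2) (2*Real.arctan (r^2)/(r^2) * (2*r)) r :=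
    HasDerivAt.comp r (hasDerivAt_Fi (by positivity)) h2
  exact h.congr_deriv (by
    rw [div_mul_eq_mul_div, div_eq_div_iff (by positivity) hrne]; ring)

lemma hasDerivAt_Asq (r : ℝ) :
    HasDerivAt (fun s : ℝ => Real.arctan (s^2)) (2*r/(1+r^4)) r := by
  have h2 : HasDerivAt (fun s : ℝ => s^2) (2*r) r := by simpa using hasDerivAt_pow 2 r
  have h : HasDerivAt (Real.arctan ∘ fun s : ℝ => s^2) (1/(1+(r^2)^2) * (2*r)) r :=
    HasDerivAt.comp r (Real.hasDerivAt_arctan (r^2)) h2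
  have h4 : ((1:ℝ)+(r^2)^2) ≠ 0 := by positivity
  have h4' : ((1:ℝ)+r^4) ≠ 0 := by positivity
  exact h.congr_deriv (by
    rw [one_div, inv_mul_eq_div, div_eq_div_iff h4 h4']; ring)

noncomputable def gg (r : ℝ) : ℝ :=
  r^2 * (-(2*(r^2)^2 * Fi (r^2) + ((r^2)^4 - 1)*Real.arctan (r^2) - 3*(r^2)^3 + r^2)
    / (8*((r^2)^4+(r^2)^2)))

noncomputable def G1 (r : ℝ) : ℝ :=
  r*(r^4-1) * Fi (r^2) / (2*(r^4+1)^2)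
    - (r^8+6*r^4+1) * Real.arctan (r^2) / (4*(r^3*(r^4+1)))
    - (r^4-1)/(4*(r*(r^4+1))) + 2*r^3/((r^4+1)^2)

noncomputable def G2 (r : ℝ) : ℝ :=
  (-3*r^8+12*r^4-1) * Fi (r^2) / (2*(r^4+1)^3)
    + 2*(r^4-1)*Real.arctan (r^2)/((r^4+1)^2)
    - (r^12-13*r^8-r^4-3)*Real.arctan (r^2)/(4*(r^4*(r^4+1)^2))
    - (r^8+6*r^4+1)/(2*(r^2*(r^4+1)^2))
    + (r^8-8*r^4-1)/(4*(r^2*(r^4+1)^2))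
    + (6*r^2-10*r^6)/((r^4+1)^3)

lemma hasDerivAt_gg {r : ℝ} (hr : 0 < r) : HasDerivAt gg (G1 r) r := by
  have hrne : r ≠ 0 := ne_of_gt hr
  have hp := hasDerivAt_pow 2 r
  have hF := hasDerivAt_Fsq hr
  have hA := hasDerivAt_Asq r
  have h22 := hp.pow 2
  have h23 := hp.pow 3
  have h24 := hp.pow 4
  have hnum := (((((h22.const_mul (2:ℝ)).mul hF).add
      ((h24.sub_const 1).mul hA)).sub (h23.const_mul (3:ℝ))).add hp).neg
  have hden := (h24.add h22).const_mul (8:ℝ)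
  have hdenne : (8:ℝ)*(((r^2)^4)+((r^2)^2)) ≠ 0 := by positivity
  have hq := hnum.div hden hdenne
  have hfull := hp.mul hq
  have h1ne : ((r:ℝ)^4+1) ≠ 0 := by positivity
  have h1ne' : ((1:ℝ)+r^4) ≠ 0 := by positivity
  exact hfull.congr_deriv (by unfold G1; simp only [Pi.add_apply, Pi.sub_apply, Pi.mul_apply, Pi.pow_apply, Pi.neg_apply, Pi.div_apply]; norm_num; field_simp; ring)

lemma hasDerivAt_G1 {r : ℝ} (hr : 0 < r) : HasDerivAt G1 (G2 r) r := by
  have hrne : r ≠ 0 := ne_of_gt hr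
  have h1ne : ((r:ℝ)^4+1) ≠ 0 := by positivity
  have h1ne' : ((1:ℝ)+r^4) ≠ 0 := by positivity
  have hF := hasDerivAt_Fsq hr
  have hA := hasDerivAt_Asq r
  have num1 := ((hasDerivAt_id' r).mul ((hasDerivAt_pow 4 r).sub_const 1)).mul hF
  have den1 := (((hasDerivAt_pow 4 r).add_const 1).pow 2).const_mul (2:ℝ)
  have ne1 : (2:ℝ)*(r^4+1)^2 ≠ 0 := by positivity
  have t1 := num1.div den1 ne1
  have num2 := (((hasDerivAt_pow 8 r).add ((hasDerivAt_pow 4 r).const_mul (6:ℝ))).add_const 1).mul hA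
  have den2 := ((hasDerivAt_pow 3 r).mul ((hasDerivAt_pow 4 r).add_const 1)).const_mul (4:ℝ)
  have ne2 : (4:ℝ)*(r^3*(r^4+1)) ≠ 0 := by positivity
  have t2 := num2.div den2 ne2
  have num3 := (hasDerivAt_pow 4 r).sub_const (1:ℝ)
  have den3 := ((hasDerivAt_id' r).mul ((hasDerivAt_pow 4 r).add_const 1)).const_mul (4:ℝ)
  have ne3 : (4:ℝ)*(r*(r^4+1)) ≠ 0 := by positivity
  have t3 := num3.div den3 ne3
  have num4 := (hasDerivAt_pow 3 r).const_mul (2:ℝ)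
  have den4 := ((hasDerivAt_pow 4 r).add_const 1).pow 2
  have ne4 : ((r:ℝ)^4+1)^2 ≠ 0 := by positivity
  have t4 := num4.div den4 ne4
  have total := ((t1.sub t2).sub t3).add t4
  exact total.congr_deriv (by unfold G2; simp only [Pi.add_apply, Pi.sub_apply, Pi.mul_apply, Pi.pow_apply, Pi.neg_apply, Pi.div_apply]; norm_num; field_simp; ring)

/-- The function `g(r) = r² φ₁(r²)` built from the explicit coefficient `φ₁` solves
`H g = h₁`, the first step of the recursion for the generalized eigenfunctions of `H`. -/
theorem phi1_equation :
    let h1 : ℝ → ℝ := fun r => 2*r^2/(r^4+1)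
    let φ : ℝ → ℝ := fun u =>
      -(2*u^2 * (∫ x in (0:ℝ)..u, 2*Real.arctan x / x)
          + (u^4 - 1)*Real.arctan u - 3*u^3 + u) / (8*(u^4+u^2))
    let g : ℝ → ℝ := fun r => r^2 * φ (r^2)
    ∀ r ∈ Ioi (0:ℝ),
      - deriv (deriv g) r - (1/r) * deriv g r + (4/r^2)*(1 - 2*(h1 r)^2) * g r = h1 r := by
  intro h1 φ g r hr
  have hr' : (0:ℝ) < r := hr
  have hg : g = gg := rfl
  have hh1 : h1 = fun r => 2*r^2/(r^4+1) := rfl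
  rw [hg, hh1]
  have hd1 : ∀ s ∈ Ioi (0:ℝ), deriv gg s = G1 s := fun s hs => (hasDerivAt_gg hs).deriv
  have hev : deriv gg =ᶠ[nhds r] G1 := by
    filter_upwards [Ioi_mem_nhds hr'] with s hs using hd1 s hs
  have hd2 : deriv (deriv gg) r = G2 r := by
    rw [Filter.EventuallyEq.deriv_eq hev]
    exact (hasDerivAt_G1 hr').deriv
  rw [hd2, hd1 r hr]
  have hrne : r ≠ 0 := ne_of_gt hr'
  have h1ne : ((r:ℝ)^4+1) ≠ 0 := by positivity
  unfold gg G1 G2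
  field_simp
  ring
end

section
/- For r > 0 let h₁(r) = 2r²/(r⁴+1), h₃(r) = (r⁴−1)/(r⁴+1), and define ψ₀(r) = ( r² − (1 + r⁴) arctan(r²) ) / (2 r³). Then for every r > 0: −ψ₀′(r) + ( (2 h₃(r) − 1)/r ) ψ₀(r) = h₁(r). That is, ψ₀ solves L* ψ₀ = φ₀ where L* = −∂_r + (2h₃ − 1)/r and φ₀ = h₁. -/
/-- The zero-frequency profile `ψ₀` solves `L* ψ₀ = h₁`, where
`L* = −∂_r + (2h₃−1)/r`. -/
theorem psi0_equation (r : ℝ) (hr : 0 < r) :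
    - deriv (fun s : ℝ => (s^2 - (1+s^4)*Real.arctan (s^2)) / (2*s^3)) r
      + ((2*((r^4-1)/(r^4+1)) - 1)/r) * ((r^2 - (1+r^4)*Real.arctan (r^2)) / (2*r^3))
      = 2*r^2/(r^4+1) := by
  have hr4 : (0:ℝ) < r^4 + 1 := by positivity
  have hsq : HasDerivAt (fun s : ℝ => s^2) (2*r) r := by
    simpa using (hasDerivAt_pow 2 r)
  have hA : HasDerivAt (fun s : ℝ => Real.arctan (s^2))
      (1/(1+(r^2)^2) * (2*r)) r :=
    by have h := (Real.hasDerivAt_arctan (r^2)).comp r hsq; exact h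
  have h4 : HasDerivAt (fun s : ℝ => 1 + s^4) (4*r^3) r := by
    simpa using (hasDerivAt_pow 4 r).const_add 1
  have hN : HasDerivAt (fun s : ℝ => s^2 - (1+s^4)*Real.arctan (s^2))
      (2*r - (4*r^3 * Real.arctan (r^2) + (1+r^4) * (1/(1+(r^2)^2) * (2*r)))) r :=
    hsq.sub (h4.mul hA)
  have hD : HasDerivAt (fun s : ℝ => 2*s^3) (2*(3*r^2)) r :=
    (hasDerivAt_pow 3 r).const_mul 2
  have hDne : 2*r^3 ≠ 0 := by positivity
  have hf := hN.div hD hDne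
  rw [show (fun s : ℝ => (s^2 - (1+s^4)*Real.arctan (s^2)) / (2*s^3)) = ((fun s : ℝ => s^2 - (1+s^4)*Real.arctan (s^2)) / fun s : ℝ => 2*s^3) from rfl, hf.deriv]
  have h1 : (1:ℝ) + (r^2)^2 = r^4 + 1 := by ring
  rw [h1]
  field_simp
  ring
end

section
/- Let 1 ≤ p < ∞ and ε ∈ (0,1). Let w : (0,∞) → (0,∞) be such that g(r) := w(r) r^{2/p} is nondecreasing and satisfies g(r) ≤ (1−ε) g(2r) for all r > 0. Then there exists a constant C (depending only on p and ε) such that for every measurable f : (0,∞) → ℂ with ∫₀^∞ |w(r) f(r)|^p r dr < ∞: ∫₀^∞ | w(r) ∫_r^∞ f(s)/s ds |^p r dr ≤ C ∫₀^∞ |w(r) f(r)|^p r dr. -/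
open MeasureTheory Set
open scoped ENNReal

private lemma rpow_logb_aux {c t : ℝ} (hc0 : 0 < c) (ht : 0 < t) :
    c ^ (Real.logb 2 t) = (t⁻¹) ^ (Real.log c⁻¹ / Real.log 2) := by
  rw [Real.rpow_def_of_pos hc0, Real.rpow_def_of_pos (inv_pos.2 ht), Real.log_inv, Real.log_inv,
    Real.logb]
  ring_nf

private lemma dyadic_bound (p ε : ℝ) (hε0 : 0 < ε) (hε1 : ε < 1) (w : ℝ → ℝ)
    (hw : ∀ r : ℝ, 0 < r → 0 < w r)
    (hmono : ∀ r s : ℝ, 0 < r → r ≤ s → w r * r ^ (2/p) ≤ w s * s ^ (2/p))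
    (hdoub : ∀ r : ℝ, 0 < r → w r * r ^ (2/p) ≤ (1 - ε) * (w (2*r) * (2*r) ^ (2/p)))
    {r s : ℝ} (hr : 0 < r) (hrs : r ≤ s) :
    w r * r ^ (2/p) ≤
      (1-ε)⁻¹ * (r/s) ^ (Real.log (1-ε)⁻¹ / Real.log 2) * (w s * s ^ (2/p)) := by
  set c : ℝ := 1 - ε with hcdef
  have hc0 : 0 < c := by simp only [hcdef]; linarith
  have hc1 : c < 1 := by simp only [hcdef]; linarith
  have hs : 0 < s := lt_of_lt_of_le hr hrs
  -- dyadic iteration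
  have claim : ∀ k : ℕ, w r * r ^ (2/p) ≤ c^k * (w (2^k * r) * (2^k * r) ^ (2/p)) := by
    intro k
    induction k with
    | zero => simp
    | succ k ih =>
      have h2k : (0:ℝ) < 2^k * r := by positivity
      have hd := hdoub (2^k*r) h2k
      have h2 : 2*((2:ℝ)^k*r) = 2^(k+1)*r := by ring
      rw [h2] at hd
      calc w r * r ^ (2/p) ≤ c^k * (w (2^k * r) * (2^k * r) ^ (2/p)) := ih
        _ ≤ c^k * (c * (w (2^(k+1) * r) * (2^(k+1) * r) ^ (2/p))) :=
            mul_le_mul_of_nonneg_left hd (pow_nonneg hc0.le k)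
        _ = c^(k+1) * (w (2^(k+1) * r) * (2^(k+1) * r) ^ (2/p)) := by ring
  set k : ℕ := ⌊Real.logb 2 (s/r)⌋₊ with hkdef
  have hsr1 : 1 ≤ s/r := (one_le_div hr).2 hrs
  have hlogb0 : 0 ≤ Real.logb 2 (s/r) := Real.logb_nonneg one_lt_two hsr1
  have h2ks : (2:ℝ)^k * r ≤ s := by
    have h1 : ((2:ℝ))^(k:ℝ) ≤ 2 ^ (Real.logb 2 (s/r)) :=
      Real.rpow_le_rpow_of_exponent_le one_le_two (Nat.floor_le hlogb0)
    rw [Real.rpow_logb two_pos (by norm_num) (by positivity), Real.rpow_natCast] at h1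
    calc (2:ℝ)^k * r ≤ (s/r) * r := mul_le_mul_of_nonneg_right h1 hr.le
      _ = s := by field_simp
  have h2k0 : (0:ℝ) < 2^k * r := by positivity
  have gchain : w r * r ^ (2/p) ≤ c^k * (w s * s ^ (2/p)) :=
    (claim k).trans (mul_le_mul_of_nonneg_left (hmono _ _ h2k0 h2ks) (pow_nonneg hc0.le k))
  have ck_bound : (c:ℝ)^k ≤ c⁻¹ * (r/s) ^ (Real.log c⁻¹ / Real.log 2) := by
    have hk1 : Real.logb 2 (s/r) - 1 ≤ (k:ℝ) := by
      have := Nat.lt_floor_add_one (Real.logb 2 (s/r))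
      rw [← hkdef] at this; linarith
    have h1 : (c:ℝ)^(k:ℝ) ≤ c ^ (Real.logb 2 (s/r) - 1) :=
      Real.rpow_le_rpow_of_exponent_ge hc0 hc1.le hk1
    rw [Real.rpow_natCast] at h1
    have h2 : c ^ (Real.logb 2 (s/r) - 1) = c⁻¹ * c ^ (Real.logb 2 (s/r)) := by
      rw [Real.rpow_sub hc0, Real.rpow_one]; ring
    have h3 : c ^ (Real.logb 2 (s/r)) = (r/s) ^ (Real.log c⁻¹ / Real.log 2) := by
      rw [rpow_logb_aux hc0 (by positivity), inv_div]
    calc (c:ℝ)^k ≤ c ^ (Real.logb 2 (s/r) - 1) := h1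
      _ = c⁻¹ * (r/s) ^ (Real.log c⁻¹ / Real.log 2) := by rw [h2, h3]
  have gs0 : 0 ≤ w s * s ^ (2/p) := mul_nonneg (hw s hs).le (Real.rpow_nonneg hs.le _)
  exact gchain.trans (mul_le_mul_of_nonneg_right ck_bound gs0)


private lemma holder_step (p γ : ℝ) (hp : 1 ≤ p) (hγ : 0 < γ) :
    ∃ K : ℝ≥0∞, K ≠ ⊤ ∧ ∀ (φ : ℝ → ℝ≥0∞), Measurable φ → ∀ r : ℝ, 0 < r →
      (∫⁻ s in Ioi r, φ s * ENNReal.ofReal s⁻¹) ^ p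
        ≤ K * ENNReal.ofReal (r ^ (-γ)) *
          ∫⁻ s in Ioi r, (φ s) ^ p * ENNReal.ofReal (s ^ (γ - 1)) := by
  have hp0 : 0 < p := lt_of_lt_of_le one_pos hp
  rcases eq_or_lt_of_le hp with hp1 | hp1
  · -- p = 1
    refine ⟨1, ENNReal.one_ne_top, fun φ hφ r hr => ?_⟩
    rw [← hp1]
    simp only [ENNReal.rpow_one, one_mul]
    have key : ∀ s ∈ Ioi r, φ s * ENNReal.ofReal s⁻¹
        ≤ ENNReal.ofReal (r ^ (-γ)) * (φ s * ENNReal.ofReal (s ^ (γ - 1))) := by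
      intro s hs
      have hs0 : 0 < s := lt_trans hr hs
      have h1 : (s:ℝ)⁻¹ = s ^ (γ-1) * s ^ (-γ) := by
        rw [← Real.rpow_add hs0, show γ-1+(-γ) = -1 by ring, Real.rpow_neg_one]
      have h2 : s ^ (-γ) ≤ r ^ (-γ) := by
        rw [Real.rpow_neg hs0.le, Real.rpow_neg hr.le]
        exact inv_anti₀ (Real.rpow_pos_of_pos hr γ) (Real.rpow_le_rpow hr.le (le_of_lt hs) hγ.le)
      calc φ s * ENNReal.ofReal s⁻¹
          = ENNReal.ofReal (s ^ (-γ)) * (φ s * ENNReal.ofReal (s ^ (γ-1))) := by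
            rw [h1, ENNReal.ofReal_mul (Real.rpow_nonneg hs0.le _)]; ring
        _ ≤ ENNReal.ofReal (r ^ (-γ)) * (φ s * ENNReal.ofReal (s ^ (γ-1))) :=
            mul_le_mul_left (ENNReal.ofReal_le_ofReal h2) _
    calc (∫⁻ s in Ioi r, φ s * ENNReal.ofReal s⁻¹)
        ≤ ∫⁻ s in Ioi r, ENNReal.ofReal (r ^ (-γ)) * (φ s * ENNReal.ofReal (s ^ (γ-1))) :=
          lintegral_mono_ae ((ae_restrict_iff' measurableSet_Ioi).2 (Filter.Eventually.of_forall key))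
      _ = ENNReal.ofReal (r ^ (-γ)) * ∫⁻ s in Ioi r, φ s * ENNReal.ofReal (s ^ (γ-1)) :=
          lintegral_const_mul' _ _ ENNReal.ofReal_ne_top
  · -- p > 1
    set q : ℝ := p / (p-1) with hqdef
    have hp1' : 0 < p - 1 := by linarith
    have hq0 : 0 < q := div_pos hp0 hp1'
    have hpq : p.HolderConjugate q := Real.holderConjugate_iff.2 ⟨hp1, by rw [hqdef, inv_div]; field_simp; ring⟩
    set u : ℝ := (γ-1)/p with hudef
    set e : ℝ := (-(1+u))*q with hedef
    have he : e < -1 := by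
      have h1 : (1+u)*q = (p+γ-1)/(p-1) := by rw [hudef, hqdef]; field_simp; ring
      have h2 : (1:ℝ) < (p+γ-1)/(p-1) := (one_lt_div hp1').2 (by linarith)
      have : 1 < (1+u)*q := by rw [h1]; exact h2
      rw [hedef]; linarith
    have hexp : (e+1)*(p/q) = -γ := by
      rw [hedef, hudef, hqdef]; field_simp; ring
    refine ⟨ENNReal.ofReal (-1/(e+1)) ^ (p/q),
      ENNReal.rpow_ne_top_of_nonneg (by positivity) ENNReal.ofReal_ne_top, fun φ hφ r hr => ?_⟩
    set A : ℝ → ℝ≥0∞ := fun s => φ s * ENNReal.ofReal (s ^ u) with hAdef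
    set B : ℝ → ℝ≥0∞ := fun s => ENNReal.ofReal (s ^ (-(1+u))) with hBdef
    have hA : Measurable A := by rw [hAdef]; measurability
    have hB : Measurable B := by rw [hBdef]; measurability
    have h1 : (∫⁻ s in Ioi r, φ s * ENNReal.ofReal s⁻¹)
        = ∫⁻ s in Ioi r, (A * B) s := by
      refine setLIntegral_congr_fun measurableSet_Ioi (fun s hs => ?_)
      have hs0 : 0 < s := lt_trans hr hs
      simp only [hAdef, hBdef, Pi.mul_apply]
      rw [mul_assoc, ← ENNReal.ofReal_mul (Real.rpow_nonneg hs0.le _), ← Real.rpow_add hs0,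
        show u + -(1+u) = -1 by ring, Real.rpow_neg_one]
    have hH := ENNReal.lintegral_mul_le_Lp_mul_Lq (volume.restrict (Ioi r)) hpq
      hA.aemeasurable hB.aemeasurable
    have hAp : (∫⁻ s in Ioi r, A s ^ p)
        = ∫⁻ s in Ioi r, (φ s) ^ p * ENNReal.ofReal (s ^ (γ - 1)) := by
      refine setLIntegral_congr_fun measurableSet_Ioi (fun s hs => ?_)
      have hs0 : 0 < s := lt_trans hr hs
      rw [hAdef]
      simp only
      rw [ENNReal.mul_rpow_of_nonneg _ _ hp0.le,
        ENNReal.ofReal_rpow_of_nonneg (Real.rpow_nonneg hs0.le _) hp0.le,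
        ← Real.rpow_mul hs0.le, hudef, div_mul_cancel₀ _ (ne_of_gt hp0)]
    have hBq : (∫⁻ s in Ioi r, B s ^ q) = ENNReal.ofReal (-r ^ (e+1) / (e+1)) := by
      have h2 : (∫⁻ s in Ioi r, B s ^ q) = ∫⁻ s in Ioi r, ENNReal.ofReal (s ^ e) := by
        refine setLIntegral_congr_fun measurableSet_Ioi (fun s hs => ?_)
        have hs0 : 0 < s := lt_trans hr hs
        rw [hBdef]
        simp only
        rw [ENNReal.ofReal_rpow_of_nonneg (Real.rpow_nonneg hs0.le _) hq0.le,
          ← Real.rpow_mul hs0.le, ← hedef]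
      rw [h2, ← ofReal_integral_eq_lintegral_ofReal (integrableOn_Ioi_rpow_of_lt he hr)
        ((ae_restrict_iff' measurableSet_Ioi).2 (Filter.Eventually.of_forall
          fun s hs => Real.rpow_nonneg (lt_trans hr hs).le e)),
        integral_Ioi_rpow_of_lt he hr]
    have hfin : (∫⁻ s in Ioi r, φ s * ENNReal.ofReal s⁻¹) ^ p
        ≤ (∫⁻ s in Ioi r, A s ^ p) * (ENNReal.ofReal (-r ^ (e+1) / (e+1))) ^ (p/q) := by
      rw [h1]
      calc (∫⁻ s in Ioi r, (A * B) s) ^ p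
          ≤ ((∫⁻ s in Ioi r, A s ^ p) ^ (1/p) * (∫⁻ s in Ioi r, B s ^ q) ^ (1/q)) ^ p :=
            ENNReal.rpow_le_rpow hH hp0.le
        _ = ((∫⁻ s in Ioi r, A s ^ p) ^ (1/p)) ^ p * ((∫⁻ s in Ioi r, B s ^ q) ^ (1/q)) ^ p := by
            rw [ENNReal.mul_rpow_of_nonneg _ _ hp0.le]
        _ = (∫⁻ s in Ioi r, A s ^ p) * (∫⁻ s in Ioi r, B s ^ q) ^ (p/q) := by
            rw [← ENNReal.rpow_mul, ← ENNReal.rpow_mul, one_div, inv_mul_cancel₀ (ne_of_gt hp0),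
              ENNReal.rpow_one, one_div, div_eq_mul_inv p q, mul_comm p q⁻¹]
        _ = (∫⁻ s in Ioi r, A s ^ p) * (ENNReal.ofReal (-r ^ (e+1) / (e+1))) ^ (p/q) := by
            rw [hBq]
    have hconst : (ENNReal.ofReal (-r ^ (e+1) / (e+1))) ^ (p/q)
        = ENNReal.ofReal (-1/(e+1)) ^ (p/q) * ENNReal.ofReal (r ^ (-γ)) := by
      have h3 : -r ^ (e+1) / (e+1) = r ^ (e+1) * (-1/(e+1)) := by ring
      rw [h3, ENNReal.ofReal_mul (Real.rpow_nonneg hr.le _),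
        ENNReal.mul_rpow_of_nonneg _ _ (by positivity : (0:ℝ) ≤ p/q),
        ENNReal.ofReal_rpow_of_nonneg (Real.rpow_nonneg hr.le _) (by positivity : (0:ℝ) ≤ p/q),
        ← Real.rpow_mul hr.le, hexp, mul_comm]
    calc (∫⁻ s in Ioi r, φ s * ENNReal.ofReal s⁻¹) ^ p
        ≤ (∫⁻ s in Ioi r, A s ^ p) * (ENNReal.ofReal (-r ^ (e+1) / (e+1))) ^ (p/q) := hfin
      _ = ENNReal.ofReal (-1/(e+1)) ^ (p/q) * ENNReal.ofReal (r ^ (-γ)) *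
            ∫⁻ s in Ioi r, (φ s) ^ p * ENNReal.ofReal (s ^ (γ - 1)) := by
          rw [hconst, hAp]; ring

private lemma pointwise_weight (p ε : ℝ) (hp : 1 ≤ p) (hε0 : 0 < ε) (hε1 : ε < 1) (w : ℝ → ℝ)
    (hw : ∀ r : ℝ, 0 < r → 0 < w r)
    (hd : ∀ {r s : ℝ}, 0 < r → r ≤ s → w r * r ^ (2/p) ≤
      (1-ε)⁻¹ * (r/s) ^ (Real.log (1-ε)⁻¹ / Real.log 2) * (w s * s ^ (2/p)))
    {a γ r s : ℝ} (ha : a = Real.log (1-ε)⁻¹ / Real.log 2) (hγ : γ = a*p/2)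
    (hr : 0 < r) (hrs : r < s) :
    (w r)^p * r^(1-γ) ≤
      ((1-ε)⁻¹^p * ((w s * s ^ (2/p))^p * s^(-(a*p)))) * r^(a*p-1-γ) := by
  have hp0 : 0 < p := lt_of_lt_of_le one_pos hp
  have hs : 0 < s := lt_trans hr hrs
  have hc0 : 0 < (1-ε:ℝ)⁻¹ := inv_pos.2 (by linarith)
  have hgr0 : (0:ℝ) ≤ w r * r ^ (2/p) := by
    have := hw r hr; positivity
  have hgs0 : (0:ℝ) ≤ w s * s ^ (2/p) := by
    have := hw s hs; positivity
  have hP : (w r * r^(2/p))^p ≤ ((1-ε)⁻¹ * (r/s)^a * (w s * s ^ (2/p)))^p := by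
    rw [ha]
    exact Real.rpow_le_rpow hgr0 (hd hr hrs.le) hp0.le
  have hL : (w r * r^(2/p))^p = (w r)^p * r^(2:ℝ) := by
    rw [Real.mul_rpow (hw r hr).le (Real.rpow_nonneg hr.le _), ← Real.rpow_mul hr.le,
      div_mul_cancel₀ _ (ne_of_gt hp0)]
  have hR : ((1-ε)⁻¹ * (r/s)^a * (w s * s ^ (2/p)))^p
      = ((1-ε)⁻¹^p * ((w s * s ^ (2/p))^p * s^(-(a*p)))) * r^(a*p) := by
    rw [Real.mul_rpow (by positivity) hgs0, Real.mul_rpow hc0.le (Real.rpow_nonneg (by positivity) _),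
      ← Real.rpow_mul (by positivity : (0:ℝ) ≤ r/s), Real.div_rpow hr.le hs.le,
      Real.rpow_neg hs.le, div_eq_mul_inv]
    ring
  have key : (w r)^p * r^(2:ℝ) ≤ ((1-ε)⁻¹^p * ((w s * s ^ (2/p))^p * s^(-(a*p)))) * r^(a*p) := by
    rw [← hL, ← hR]; exact hP
  have h2 : (w r)^p * r^(1-γ) = ((w r)^p * r^(2:ℝ)) * r^(-1-γ) := by
    rw [mul_assoc, ← Real.rpow_add hr, show (2:ℝ) + (-1-γ) = 1-γ by ring]
  have h3 : (((1-ε)⁻¹^p * ((w s * s ^ (2/p))^p * s^(-(a*p)))) * r^(a*p)) * r^(-1-γ)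
      = ((1-ε)⁻¹^p * ((w s * s ^ (2/p))^p * s^(-(a*p)))) * r^(a*p-1-γ) := by
    rw [mul_assoc, ← Real.rpow_add hr, show a*p + (-1-γ) = a*p-1-γ by ring]
  rw [h2, ← h3]
  exact mul_le_mul_of_nonneg_right key (Real.rpow_nonneg hr.le _)

private lemma weight_integral_bound (p ε : ℝ) (hp : 1 ≤ p) (hε0 : 0 < ε) (hε1 : ε < 1) (w : ℝ → ℝ)
    (hw : ∀ r : ℝ, 0 < r → 0 < w r)
    (hd : ∀ {r s : ℝ}, 0 < r → r ≤ s → w r * r ^ (2/p) ≤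
      (1-ε)⁻¹ * (r/s) ^ (Real.log (1-ε)⁻¹ / Real.log 2) * (w s * s ^ (2/p)))
    {a γ s : ℝ} (ha : a = Real.log (1-ε)⁻¹ / Real.log 2) (hγ : γ = a*p/2)
    (ha0 : 0 < a) (hs : 0 < s) :
    (∫⁻ r in Ioo 0 s, ENNReal.ofReal ((w r)^p * r^(1-γ)))
      ≤ ENNReal.ofReal (((1-ε)⁻¹^p * (2/(a*p))) * ((w s * s ^ (2/p))^p * s^(-γ))) := by
  have hp0 : 0 < p := lt_of_lt_of_le one_pos hp
  set D : ℝ := (1-ε)⁻¹^p * ((w s * s ^ (2/p))^p * s^(-(a*p))) with hDdef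
  have hD0 : 0 ≤ D := by
    have h1 : (0:ℝ) < (1-ε)⁻¹ := inv_pos.2 (by linarith)
    have h2 : (0:ℝ) ≤ w s * s ^ (2/p) := by have := hw s hs; positivity
    exact mul_nonneg (Real.rpow_nonneg h1.le p)
      (mul_nonneg (Real.rpow_nonneg h2 p) (Real.rpow_nonneg hs.le _))
  set e₂ : ℝ := a*p-1-γ with he₂def
  have he₂ : (-1:ℝ) < e₂ := by rw [he₂def, hγ]; nlinarith [mul_pos ha0 hp0]
  have he₂1 : e₂ + 1 = a*p/2 := by rw [he₂def, hγ]; ring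
  have step1 : (∫⁻ r in Ioo 0 s, ENNReal.ofReal ((w r)^p * r^(1-γ)))
      ≤ ∫⁻ r in Ioo 0 s, ENNReal.ofReal (D * r^e₂) := by
    refine lintegral_mono_ae ((ae_restrict_iff' measurableSet_Ioo).2
      (Filter.Eventually.of_forall fun r hr => ?_))
    exact ENNReal.ofReal_le_ofReal
      (pointwise_weight p ε hp hε0 hε1 w hw hd ha hγ hr.1 hr.2)
  have step2 : (∫⁻ r in Ioo 0 s, ENNReal.ofReal (D * r^e₂))
      = ENNReal.ofReal D * ∫⁻ r in Ioo 0 s, ENNReal.ofReal (r^e₂) := by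
    rw [← lintegral_const_mul' _ _ ENNReal.ofReal_ne_top]
    refine setLIntegral_congr_fun measurableSet_Ioo (fun r hr => ?_)
    rw [ENNReal.ofReal_mul hD0]
  have step3 : (∫⁻ r in Ioo 0 s, ENNReal.ofReal (r^e₂))
      = ENNReal.ofReal (s^(e₂+1)/(e₂+1)) := by
    rw [← ofReal_integral_eq_lintegral_ofReal ((intervalIntegral.integrableOn_Ioo_rpow_iff hs).2 he₂)
      ((ae_restrict_iff' measurableSet_Ioo).2 (Filter.Eventually.of_forall
        fun r hr => Real.rpow_nonneg hr.1.le e₂))]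
    congr 1
    rw [← integral_Ioc_eq_integral_Ioo, ← intervalIntegral.integral_of_le hs.le,
      integral_rpow (Or.inl he₂), Real.zero_rpow (by linarith : e₂ + 1 ≠ 0), sub_zero]
  rw [step2, step3] at step1
  have hap : (0:ℝ) < a*p := mul_pos ha0 hp0
  have hss : s^(-(a*p)) * s^(a*p/2) = s^(-γ) := by
    rw [← Real.rpow_add hs, hγ]; congr 1; ring
  calc (∫⁻ r in Ioo 0 s, ENNReal.ofReal ((w r)^p * r^(1-γ)))
      ≤ ENNReal.ofReal D * ENNReal.ofReal (s^(e₂+1)/(e₂+1)) := step1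
    _ = ENNReal.ofReal (D * (s^(e₂+1)/(e₂+1))) := (ENNReal.ofReal_mul hD0).symm
    _ = ENNReal.ofReal (((1-ε)⁻¹^p * (2/(a*p))) * ((w s * s ^ (2/p))^p * s^(-γ))) := by
        congr 1
        rw [he₂1, hDdef, ← hss]
        field_simp

/-- Weighted Hardy-type bound for `[r∂_r]⁻¹` on `L^p((0,∞), r dr)`, for weights `w` such that
`g(r) = w(r) r^{2/p}` is nondecreasing with `g(r) ≤ (1−ε) g(2r)`. -/
theorem hardy_rdr_weighted (p : ℝ) (hp : 1 ≤ p) (ε : ℝ) (hε0 : 0 < ε) (hε1 : ε < 1)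
    (w : ℝ → ℝ) (hw : ∀ r : ℝ, 0 < r → 0 < w r)
    (hmono : ∀ r s : ℝ, 0 < r → r ≤ s → w r * r ^ (2/p) ≤ w s * s ^ (2/p))
    (hdoub : ∀ r : ℝ, 0 < r → w r * r ^ (2/p) ≤ (1 - ε) * (w (2*r) * (2*r) ^ (2/p))) :
    ∃ C : ℝ, ∀ f : ℝ → ℂ, Measurable f →
      IntegrableOn (fun r => (w r * ‖f r‖) ^ p * r) (Ioi 0) →
      (∫ r in Ioi (0:ℝ), (w r * ‖∫ s in Ioi r, f s / (s:ℂ)‖) ^ p * r)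
        ≤ C * ∫ r in Ioi (0:ℝ), (w r * ‖f r‖) ^ p * r := by
  classical
  have hp0 : 0 < p := lt_of_lt_of_le one_pos hp
  set a : ℝ := Real.log (1-ε)⁻¹ / Real.log 2 with hadef
  have ha0 : 0 < a :=
    div_pos (Real.log_pos ((one_lt_inv₀ (by linarith)).2 (by linarith))) (Real.log_pos one_lt_two)
  set γ : ℝ := a*p/2 with hγdef
  have hγ0 : 0 < γ := by positivity
  have hd : ∀ {r s : ℝ}, 0 < r → r ≤ s → w r * r ^ (2/p) ≤
      (1-ε)⁻¹ * (r/s) ^ (Real.log (1-ε)⁻¹ / Real.log 2) * (w s * s ^ (2/p)) :=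
    fun hr hrs => dyadic_bound p ε hε0 hε1 w hw hmono hdoub hr hrs
  obtain ⟨Kh, hKh, hHol⟩ := holder_step p γ hp hγ0
  set K3r : ℝ := (1-ε)⁻¹^p * (2/(a*p)) with hK3rdef
  refine ⟨(Kh * ENNReal.ofReal K3r).toReal, ?_⟩
  intro f hf hInt
  -- measurable substitute for w
  set g' : ℝ → ℝ := fun r => if 0 < r then w r * r ^ (2/p) else 0 with hg'def
  have hg'mono : Monotone g' := by
    intro x y hxy
    simp only [hg'def]
    by_cases hx : 0 < x
    · rw [if_pos hx, if_pos (lt_of_lt_of_le hx hxy)]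
      exact hmono x y hx hxy
    · rw [if_neg hx]
      by_cases hy : 0 < y
      · rw [if_pos hy]
        have := hw y hy
        positivity
      · rw [if_neg hy]
  set W : ℝ → ℝ := fun r => g' r * r ^ (-(2/p)) with hWdef
  have hWmeas : Measurable W :=
    hg'mono.measurable.mul (measurable_id.pow measurable_const)
  have hWw : ∀ r : ℝ, 0 < r → W r = w r := by
    intro r hr
    simp only [hWdef, hg'def, if_pos hr]
    rw [mul_assoc, ← Real.rpow_add hr, add_neg_cancel, Real.rpow_zero, mul_one]
  -- basic objects
  set Φ : ℝ → ℝ≥0∞ := fun s => (‖f s‖₊ : ℝ≥0∞) with hΦdef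
  have hΦ : Measurable Φ := hf.nnnorm.coe_nnreal_ennreal
  set H : ℝ → ℝ≥0∞ := fun s => Φ s ^ p * ENNReal.ofReal (s^(γ-1)) with hHdef
  have hH : Measurable H :=
    (hΦ.pow measurable_const).mul ((measurable_id.pow measurable_const).ennreal_ofReal)
  have hH_ne_top : ∀ s, H s ≠ ⊤ := fun s =>
    ENNReal.mul_ne_top (ENNReal.rpow_ne_top_of_nonneg hp0.le ENNReal.coe_ne_top)
      ENNReal.ofReal_ne_top
  set Fm : ℝ → ℝ≥0∞ := fun r => ENNReal.ofReal ((W r)^p * r^(1-γ)) with hFmdef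
  have hFm : Measurable Fm :=
    ((hWmeas.pow measurable_const).mul (measurable_id.pow measurable_const)).ennreal_ofReal
  set v : ℝ → ℝ := fun r => (w r * ‖f r‖) ^ p * r with hvdef
  set Lv : ℝ≥0∞ := ∫⁻ r in Ioi 0, ENNReal.ofReal (v r) with hLvdef
  have hv0 : ∀ r ∈ Ioi (0:ℝ), 0 ≤ v r := by
    intro r hr
    have h1 : 0 ≤ w r * ‖f r‖ := mul_nonneg (hw r hr).le (norm_nonneg _)
    have h2 : (0:ℝ) < r := hr
    simp only [hvdef]
    positivity
  have hv_ae : 0 ≤ᵐ[volume.restrict (Ioi (0:ℝ))] v :=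
    (ae_restrict_iff' measurableSet_Ioi).2 (Filter.Eventually.of_forall hv0)
  have hLv_eq : Lv = ENNReal.ofReal (∫ r in Ioi (0:ℝ), v r) :=
    (ofReal_integral_eq_lintegral_ofReal hInt hv_ae).symm
  have hLv_ne : Lv ≠ ⊤ := by rw [hLv_eq]; exact ENNReal.ofReal_ne_top
  -- core estimate
  have hcore : (∫⁻ r in Ioi (0:ℝ),
      ENNReal.ofReal ((w r * ‖∫ s in Ioi r, f s / (s:ℂ)‖) ^ p * r))
      ≤ (Kh * ENNReal.ofReal K3r) * Lv := by
    have hK3r0 : 0 ≤ K3r := by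
      have h1 : (0:ℝ) < (1-ε)⁻¹ := inv_pos.2 (by linarith)
      have h2 : (0:ℝ) < a*p := mul_pos ha0 hp0
      rw [hK3rdef]
      positivity
    have stepABC : (∫⁻ r in Ioi (0:ℝ),
        ENNReal.ofReal ((w r * ‖∫ s in Ioi r, f s / (s:ℂ)‖) ^ p * r))
        ≤ ∫⁻ r in Ioi (0:ℝ), Kh * (Fm r * ∫⁻ s in Ioi r, H s) := by
      refine lintegral_mono_ae ((ae_restrict_iff' measurableSet_Ioi).2
        (Filter.Eventually.of_forall fun r hr => ?_))
      have hr : (0:ℝ) < r := hr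
      have hx0 : 0 ≤ w r * ‖∫ s in Ioi r, f s / (s:ℂ)‖ := mul_nonneg (hw r hr).le (norm_nonneg _)
      have e1 : ENNReal.ofReal ((w r * ‖∫ s in Ioi r, f s / (s:ℂ)‖) ^ p * r)
          = (ENNReal.ofReal (w r) * (‖∫ s in Ioi r, f s / (s:ℂ)‖₊ : ℝ≥0∞)) ^ p
            * ENNReal.ofReal r := by
        rw [ENNReal.ofReal_mul (Real.rpow_nonneg hx0 p),
          ← ENNReal.ofReal_rpow_of_nonneg hx0 hp0.le,
          ENNReal.ofReal_mul (hw r hr).le, ofReal_norm, enorm_eq_nnnorm]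
      have e2 : (‖∫ s in Ioi r, f s / (s:ℂ)‖₊ : ℝ≥0∞) ≤ ∫⁻ s in Ioi r, Φ s * ENNReal.ofReal s⁻¹ := by
        refine (enorm_integral_le_lintegral_enorm _).trans ?_
        refine le_of_eq (setLIntegral_congr_fun measurableSet_Ioi
          (fun s hs => ?_))
        have hs0 : 0 < s := lt_trans hr hs
        rw [← ofReal_norm, norm_div, Complex.norm_real, Real.norm_eq_abs,
          abs_of_pos hs0, div_eq_mul_inv, ENNReal.ofReal_mul (norm_nonneg _),
          ofReal_norm, enorm_eq_nnnorm]
      have e3 : (∫⁻ s in Ioi r, Φ s * ENNReal.ofReal s⁻¹) ^ p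
          ≤ Kh * ENNReal.ofReal (r ^ (-γ)) * ∫⁻ s in Ioi r, H s := by
        have := hHol Φ hΦ r hr
        simpa [hHdef] using this
      have e4 : ENNReal.ofReal ((w r)^p * r^(-γ+1))
          = ENNReal.ofReal (w r) ^ p * ENNReal.ofReal (r^(-γ)) * ENNReal.ofReal r := by
        rw [Real.rpow_add_one (ne_of_gt hr), ← mul_assoc,
          ENNReal.ofReal_mul (mul_nonneg (Real.rpow_nonneg (hw r hr).le p)
            (Real.rpow_nonneg hr.le _)),
          ENNReal.ofReal_mul (Real.rpow_nonneg (hw r hr).le p),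
          ENNReal.ofReal_rpow_of_nonneg (hw r hr).le hp0.le]
      calc ENNReal.ofReal ((w r * ‖∫ s in Ioi r, f s / (s:ℂ)‖) ^ p * r)
          = (ENNReal.ofReal (w r) * (‖∫ s in Ioi r, f s / (s:ℂ)‖₊ : ℝ≥0∞)) ^ p
              * ENNReal.ofReal r := e1
        _ ≤ (ENNReal.ofReal (w r) * ∫⁻ s in Ioi r, Φ s * ENNReal.ofReal s⁻¹) ^ p
              * ENNReal.ofReal r :=
            mul_le_mul_left (ENNReal.rpow_le_rpow (mul_le_mul_right e2 _) hp0.le) _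
        _ = ENNReal.ofReal (w r) ^ p * (∫⁻ s in Ioi r, Φ s * ENNReal.ofReal s⁻¹) ^ p
              * ENNReal.ofReal r := by
            rw [ENNReal.mul_rpow_of_nonneg _ _ hp0.le]
        _ ≤ ENNReal.ofReal (w r) ^ p * (Kh * ENNReal.ofReal (r ^ (-γ)) * ∫⁻ s in Ioi r, H s)
              * ENNReal.ofReal r := mul_le_mul_left (mul_le_mul_right e3 _) _
        _ = Kh * (Fm r * ∫⁻ s in Ioi r, H s) := by
            rw [hFmdef]
            simp only
            rw [hWw r hr, show (1-γ:ℝ) = -γ+1 by ring, e4]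
            ring
    set k : ℝ → ℝ → ℝ≥0∞ := fun r s => if 0 < r ∧ r < s then Fm r * H s else 0 with hkdef
    have hk : Measurable (Function.uncurry k) := by
      have hkeq : Function.uncurry k = fun q : ℝ × ℝ =>
          if 0 < q.1 ∧ q.1 < q.2 then Fm q.1 * H q.2 else 0 := rfl
      rw [hkeq]
      exact Measurable.ite ((measurableSet_lt measurable_const measurable_fst).inter
        (measurableSet_lt measurable_fst measurable_snd))
        ((hFm.comp measurable_fst).mul (hH.comp measurable_snd)) measurable_const
    have hD1 : ∀ r : ℝ, (∫⁻ s, k r s)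
        = (Ioi (0:ℝ)).indicator (fun r => Fm r * ∫⁻ s in Ioi r, H s) r := by
      intro r
      by_cases hr : 0 < r
      · rw [indicator_of_mem (mem_Ioi.2 hr)]
        have h1 : (fun s => k r s) = (Ioi r).indicator (fun s => Fm r * H s) := by
          funext s
          simp only [hkdef, indicator_apply, mem_Ioi]
          by_cases hs : r < s
          · simp [hs, hr]
          · simp [hs, hr]
        rw [h1, lintegral_indicator measurableSet_Ioi,
          lintegral_const_mul' _ _ ENNReal.ofReal_ne_top]
      · rw [indicator_of_notMem (by simpa using hr)]
        have h1 : (fun s => k r s) = fun _ => 0 := by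
          funext s; simp [hkdef, hr]
        rw [h1, lintegral_zero]
    have hD2 : ∀ s : ℝ, (∫⁻ r, k r s)
        = (Ioi (0:ℝ)).indicator (fun s => (∫⁻ r in Ioo 0 s, Fm r) * H s) s := by
      intro s
      by_cases hs : 0 < s
      · rw [indicator_of_mem (mem_Ioi.2 hs)]
        have h1 : (fun r => k r s) = (Ioo 0 s).indicator (fun r => Fm r * H s) := by
          funext r
          simp only [hkdef, indicator_apply, mem_Ioo]
        rw [h1, lintegral_indicator measurableSet_Ioo,
          lintegral_mul_const' _ _ (hH_ne_top s)]
      · rw [indicator_of_notMem (by simpa using hs)]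
        have h1 : (fun r => k r s) = fun _ => 0 := by
          funext r
          have hns : ¬(0 < r ∧ r < s) := fun h => hs (lt_trans h.1 h.2)
          simp [hkdef, hns]
        rw [h1, lintegral_zero]
    have hTon : (∫⁻ r in Ioi (0:ℝ), Fm r * ∫⁻ s in Ioi r, H s)
        = ∫⁻ s in Ioi (0:ℝ), (∫⁻ r in Ioo 0 s, Fm r) * H s := by
      rw [← lintegral_indicator measurableSet_Ioi, ← lintegral_indicator measurableSet_Ioi]
      calc ∫⁻ r, (Ioi (0:ℝ)).indicator (fun r => Fm r * ∫⁻ s in Ioi r, H s) r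
          = ∫⁻ r, ∫⁻ s, k r s := by simp_rw [hD1]
        _ = ∫⁻ s, ∫⁻ r, k r s := lintegral_lintegral_swap hk.aemeasurable
        _ = ∫⁻ s, (Ioi (0:ℝ)).indicator (fun s => (∫⁻ r in Ioo 0 s, Fm r) * H s) s := by
            simp_rw [hD2]
    have hEF : (∫⁻ s in Ioi (0:ℝ), (∫⁻ r in Ioo 0 s, Fm r) * H s)
        ≤ ENNReal.ofReal K3r * Lv := by
      have hpoint : ∀ s ∈ Ioi (0:ℝ), (∫⁻ r in Ioo 0 s, Fm r) * H s
          ≤ ENNReal.ofReal K3r * ENNReal.ofReal (v s) := by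
        intro s hs
        have hs : (0:ℝ) < s := hs
        have hFmW : (∫⁻ r in Ioo 0 s, Fm r)
            = ∫⁻ r in Ioo 0 s, ENNReal.ofReal ((w r)^p * r^(1-γ)) := by
          refine setLIntegral_congr_fun measurableSet_Ioo
            (fun r hr => ?_)
          rw [hFmdef]
          simp only
          rw [hWw r hr.1]
        have hwb := weight_integral_bound p ε hp hε0 hε1 w hw hd hadef hγdef ha0 hs
        have hgs0 : (0:ℝ) ≤ w s * s ^ (2/p) := by have := hw s hs; positivity
        have hreal : K3r * ((w s * s ^ (2/p))^p * s^(-γ)) * (‖f s‖^p * s^(γ-1))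
            = K3r * v s := by
          have hgsp : (w s * s ^ (2/p))^p = (w s)^p * s^(2:ℝ) := by
            rw [Real.mul_rpow (hw s hs).le (Real.rpow_nonneg hs.le _),
              ← Real.rpow_mul hs.le, div_mul_cancel₀ _ (ne_of_gt hp0)]
          have hspow : s^(2:ℝ) * s^(-γ) * s^(γ-1) = s := by
            rw [← Real.rpow_add hs, ← Real.rpow_add hs,
              show (2:ℝ) + -γ + (γ-1) = 1 by ring, Real.rpow_one]
          have hvs : v s = (w s)^p * ‖f s‖^p * s := by
            rw [hvdef]
            simp only
            rw [Real.mul_rpow (hw s hs).le (norm_nonneg _)]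
          calc K3r * ((w s * s ^ (2/p))^p * s^(-γ)) * (‖f s‖^p * s^(γ-1))
              = K3r * ((w s)^p * ‖f s‖^p) * (s^(2:ℝ) * s^(-γ) * s^(γ-1)) := by
                rw [hgsp]; ring
            _ = K3r * v s := by rw [hspow, hvs]; ring
        calc (∫⁻ r in Ioo 0 s, Fm r) * H s
            ≤ ENNReal.ofReal (K3r * ((w s * s ^ (2/p))^p * s^(-γ))) * H s := by
              rw [hFmW]
              exact mul_le_mul_left hwb _
          _ = ENNReal.ofReal K3r * ENNReal.ofReal (v s) := by
              rw [hHdef]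
              simp only
              rw [show Φ s = ENNReal.ofReal ‖f s‖ by
                  rw [hΦdef]; simp only; rw [ofReal_norm, enorm_eq_nnnorm],
                ENNReal.ofReal_rpow_of_nonneg (norm_nonneg _) hp0.le,
                ← ENNReal.ofReal_mul (Real.rpow_nonneg (norm_nonneg _) p),
                ← ENNReal.ofReal_mul (mul_nonneg hK3r0 (mul_nonneg
                  (Real.rpow_nonneg hgs0 p) (Real.rpow_nonneg hs.le _))),
                hreal, ENNReal.ofReal_mul hK3r0]
      calc (∫⁻ s in Ioi (0:ℝ), (∫⁻ r in Ioo 0 s, Fm r) * H s)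
          ≤ ∫⁻ s in Ioi (0:ℝ), ENNReal.ofReal K3r * ENNReal.ofReal (v s) :=
            lintegral_mono_ae ((ae_restrict_iff' measurableSet_Ioi).2
              (Filter.Eventually.of_forall hpoint))
        _ = ENNReal.ofReal K3r * Lv := by
            rw [lintegral_const_mul' _ _ ENNReal.ofReal_ne_top, hLvdef]
    calc (∫⁻ r in Ioi (0:ℝ),
        ENNReal.ofReal ((w r * ‖∫ s in Ioi r, f s / (s:ℂ)‖) ^ p * r))
        ≤ ∫⁻ r in Ioi (0:ℝ), Kh * (Fm r * ∫⁻ s in Ioi r, H s) := stepABC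
      _ = Kh * ∫⁻ r in Ioi (0:ℝ), Fm r * ∫⁻ s in Ioi r, H s :=
          lintegral_const_mul' _ _ hKh
      _ = Kh * ∫⁻ s in Ioi (0:ℝ), (∫⁻ r in Ioo 0 s, Fm r) * H s := by rw [hTon]
      _ ≤ Kh * (ENNReal.ofReal K3r * Lv) := mul_le_mul_right hEF _
      _ = (Kh * ENNReal.ofReal K3r) * Lv := by rw [mul_assoc]
  -- measurability of the LHS integrand
  have hu_sm : AEStronglyMeasurable (fun r => (w r * ‖∫ s in Ioi r, f s / (s:ℂ)‖) ^ p * r)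
      (volume.restrict (Ioi (0:ℝ))) := by
    have hFmeas : StronglyMeasurable (fun q : ℝ × ℝ => if q.1 < q.2 then f q.2 / (q.2:ℂ) else 0) := by
      apply Measurable.stronglyMeasurable
      exact Measurable.ite (measurableSet_lt measurable_fst measurable_snd)
        ((hf.comp measurable_snd).div (Complex.measurable_ofReal.comp measurable_snd))
        measurable_const
    have hI : StronglyMeasurable (fun r : ℝ => ∫ s in Ioi r, f s / (s:ℂ)) := by
      have h1 := hFmeas.integral_prod_right' (ν := volume)
      have h2 : (fun r : ℝ => ∫ s, (if r < s then f s / (s:ℂ) else 0))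
          = fun r : ℝ => ∫ s in Ioi r, f s / (s:ℂ) := by
        funext r
        rw [← integral_indicator measurableSet_Ioi]
        congr 1
      rw [← h2]
      exact h1
    have hsm : StronglyMeasurable (fun r => (W r * ‖∫ s in Ioi r, f s / (s:ℂ)‖) ^ p * r) :=
      (((hWmeas.mul hI.measurable.norm).pow measurable_const).mul
        measurable_id).stronglyMeasurable
    refine hsm.aestronglyMeasurable.congr ?_
    refine (ae_restrict_iff' measurableSet_Ioi).2 (Filter.Eventually.of_forall fun r hr => ?_)
    dsimp only
    rw [hWw r hr]
  have hu_ae : 0 ≤ᵐ[volume.restrict (Ioi (0:ℝ))]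
      (fun r => (w r * ‖∫ s in Ioi r, f s / (s:ℂ)‖) ^ p * r) := by
    refine (ae_restrict_iff' measurableSet_Ioi).2 (Filter.Eventually.of_forall fun r hr => ?_)
    have h1 : 0 ≤ w r * ‖∫ s in Ioi r, f s / (s:ℂ)‖ := mul_nonneg (hw r hr).le (norm_nonneg _)
    have h2 : (0:ℝ) < r := hr
    positivity
  have hIv0 : 0 ≤ ∫ r in Ioi (0:ℝ), v r := setIntegral_nonneg measurableSet_Ioi hv0
  calc (∫ r in Ioi (0:ℝ), (w r * ‖∫ s in Ioi r, f s / (s:ℂ)‖) ^ p * r)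
      = (∫⁻ r in Ioi (0:ℝ),
          ENNReal.ofReal ((w r * ‖∫ s in Ioi r, f s / (s:ℂ)‖) ^ p * r)).toReal :=
        integral_eq_lintegral_of_nonneg_ae hu_ae hu_sm
    _ ≤ ((Kh * ENNReal.ofReal K3r) * Lv).toReal :=
        ENNReal.toReal_mono (ENNReal.mul_ne_top (ENNReal.mul_ne_top hKh ENNReal.ofReal_ne_top)
          hLv_ne) hcore
    _ = (Kh * ENNReal.ofReal K3r).toReal * Lv.toReal := ENNReal.toReal_mul
    _ = (Kh * ENNReal.ofReal K3r).toReal * ∫ r in Ioi (0:ℝ), v r := by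
        rw [hLv_eq, ENNReal.toReal_ofReal hIv0]
end

section
/- There exists a universal constant C such that for every continuously differentiable h : (0,∞) → ℂ: Σ_{m ∈ ℤ} ( sup_{2^{m−1} < r < 2^{m+1}} |h(r)| )² ≤ C ( ∫₀^∞ |h′(r)|² r dr + ∫₀^∞ |h(r)|²/r² · r dr ), whenever the right-hand side is finite. -/
open MeasureTheory Set

lemma annulus_mem_cases {m : ℤ} {x : ℝ} (hx : 0 < x)
    (h : x ∈ Ioo ((2:ℝ)^(m-1)) ((2:ℝ)^(m+1))) :
    m = ⌊Real.logb 2 x⌋ ∨ m = ⌊Real.logb 2 x⌋ + 1 := by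
  have hb : (1:ℝ) < 2 := one_lt_two
  set L := Real.logb 2 x with hL
  have h1 : ((m:ℝ) - 1) < L := by
    rw [hL, Real.lt_logb_iff_rpow_lt hb hx]
    have := h.1
    rwa [show ((m:ℝ) - 1) = (((m - 1 : ℤ) : ℝ)) by push_cast; ring, Real.rpow_intCast]
  have h2 : L < (m:ℝ) + 1 := by
    rw [hL, Real.logb_lt_iff_lt_rpow hb hx]
    have := h.2
    rwa [show ((m:ℝ) + 1) = (((m + 1 : ℤ) : ℝ)) by push_cast; ring, Real.rpow_intCast]
  have hk1 : ⌊L⌋ ≤ m := by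
    have : ⌊L⌋ < m + 1 := by
      rw [Int.floor_lt]; push_cast; linarith
    omega
  have hk2 : m ≤ ⌊L⌋ + 1 := by
    have : m - 1 ≤ ⌊L⌋ := by
      rw [Int.le_floor]; push_cast; linarith
    omega
  omega

lemma annulus_indicator_sum (x : ℝ) :
    ∑' m : ℤ, (Ioo ((2:ℝ)^(m-1)) ((2:ℝ)^(m+1))).indicator (fun _ => (1:ENNReal)) x
      ≤ 2 * (Ioi (0:ℝ)).indicator (fun _ => (1:ENNReal)) x := by
  rcases le_or_gt x 0 with hx | hx
  · have : ∀ m : ℤ, (Ioo ((2:ℝ)^(m-1)) ((2:ℝ)^(m+1))).indicator (fun _ => (1:ENNReal)) x = 0 := by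
      intro m
      apply indicator_of_notMem
      intro hmem
      exact absurd (lt_trans (zpow_pos two_pos _) hmem.1) (not_lt.2 hx)
    simp [this]
  · set k := ⌊Real.logb 2 x⌋
    have hsum : ∑' m : ℤ, (Ioo ((2:ℝ)^(m-1)) ((2:ℝ)^(m+1))).indicator (fun _ => (1:ENNReal)) x
        = ∑ m ∈ ({k, k+1} : Finset ℤ),
            (Ioo ((2:ℝ)^(m-1)) ((2:ℝ)^(m+1))).indicator (fun _ => (1:ENNReal)) x := by
      apply tsum_eq_sum
      intro m hm
      simp only [Finset.mem_insert, Finset.mem_singleton] at hm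
      apply indicator_of_notMem
      intro hmem
      rcases annulus_mem_cases hx hmem with h | h <;> simp [h, k] at hm
    rw [hsum, Finset.sum_pair (by omega : k ≠ k + 1)]
    have h1 : ∀ m : ℤ, (Ioo ((2:ℝ)^(m-1)) ((2:ℝ)^(m+1))).indicator (fun _ => (1:ENNReal)) x ≤ 1 :=
      fun m => indicator_apply_le (fun _ => le_refl _)
    calc _ ≤ (1:ENNReal) + 1 := add_le_add (h1 k) (h1 (k+1))
    _ = 2 * (Ioi (0:ℝ)).indicator (fun _ => (1:ENNReal)) x := by
        rw [Set.indicator_of_mem (Set.mem_Ioi.mpr hx)]; ring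

lemma annulus_measure_sum :
    Measure.sum (fun m : ℤ => volume.restrict (Ioo ((2:ℝ)^(m-1)) ((2:ℝ)^(m+1))))
      ≤ (2:ENNReal) • volume.restrict (Ioi (0:ℝ)) := by
  rw [Measure.le_iff]
  intro s hs
  rw [Measure.sum_apply _ hs]
  have hmeas : ∀ m : ℤ, MeasurableSet (Ioo ((2:ℝ)^(m-1)) ((2:ℝ)^(m+1))) :=
    fun m => measurableSet_Ioo
  have hrw : ∀ m : ℤ, volume.restrict (Ioo ((2:ℝ)^(m-1)) ((2:ℝ)^(m+1))) s
      = ∫⁻ x, (Ioo ((2:ℝ)^(m-1)) ((2:ℝ)^(m+1))).indicator (fun _ => (1:ENNReal)) x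
          ∂(volume.restrict s) := by
    intro m
    rw [lintegral_indicator (hmeas m), setLIntegral_one, Measure.restrict_apply hs,
      Measure.restrict_apply (hmeas m), Set.inter_comm]
  simp_rw [hrw]
  rw [← lintegral_tsum (fun m => (measurable_const.indicator (hmeas m)).aemeasurable)]
  calc ∫⁻ x, ∑' m : ℤ, (Ioo ((2:ℝ)^(m-1)) ((2:ℝ)^(m+1))).indicator (fun _ => (1:ENNReal)) x
          ∂(volume.restrict s)
      ≤ ∫⁻ x, 2 * (Ioi (0:ℝ)).indicator (fun _ => (1:ENNReal)) x ∂(volume.restrict s) :=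
        lintegral_mono annulus_indicator_sum
    _ = 2 * volume.restrict s (Ioi 0) := by
        rw [lintegral_const_mul _ (measurable_const.indicator measurableSet_Ioi),
          lintegral_indicator measurableSet_Ioi, setLIntegral_one]
    _ = ((2:ENNReal) • volume.restrict (Ioi (0:ℝ))) s := by
        rw [Measure.smul_apply, smul_eq_mul, Measure.restrict_apply hs,
          Measure.restrict_apply measurableSet_Ioi, Set.inter_comm]

lemma annulus_pointwise_bound (h h' : ℝ → ℂ)
    (hd : ∀ r ∈ Ioi (0:ℝ), HasDerivAt h (h' r) r)
    (hc' : ContinuousOn h' (Ioi 0))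
    (hi1 : IntegrableOn (fun r => ‖h' r‖^2 * r) (Ioi 0))
    (hi2 : IntegrableOn (fun r => ‖h r‖^2 / r^2 * r) (Ioi 0))
    (m : ℤ) {r : ℝ} (hr : r ∈ Ioo ((2:ℝ)^(m-1)) ((2:ℝ)^(m+1))) :
    ‖h r‖^2 ≤ 3 * ∫ t in Ioo ((2:ℝ)^(m-1)) ((2:ℝ)^(m+1)),
        (‖h' t‖^2 * t + ‖h t‖^2 / t^2 * t) := by
  set a : ℝ := (2:ℝ)^(m-1) with ha_def
  set b : ℝ := (2:ℝ)^(m+1) with hb_def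
  have ha : 0 < a := zpow_pos two_pos _
  have hb4 : b = 4 * a := by
    rw [ha_def, hb_def, show m + 1 = (m - 1) + 2 by ring, zpow_add₀ (two_ne_zero)]
    ring
  have hsub : Ioo a b ⊆ Ioi 0 := fun t ht => lt_trans ha ht.1
  -- continuity of h
  have hch : ContinuousOn h (Ioi 0) := fun x hx =>
    ((hd x hx).continuousAt).continuousWithinAt
  -- the function F and its derivative
  set F : ℝ → ℝ := fun t => (h t).re ^ 2 + (h t).im ^ 2 with hF_def
  set F' : ℝ → ℝ := fun t => 2 * ((h t).re * (h' t).re + (h t).im * (h' t).im) with hF'_def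
  have hFnorm : ∀ t, F t = ‖h t‖ ^ 2 := by
    intro t
    rw [hF_def, Complex.sq_norm, Complex.normSq_apply]
    ring
  have hF : ∀ t ∈ Ioi (0:ℝ), HasDerivAt F (F' t) t := by
    intro t ht
    have hre : HasDerivAt (fun s => (h s).re) ((h' t).re) t :=
      (Complex.reCLM.hasFDerivAt.comp_hasDerivAt t (hd t ht))
    have him : HasDerivAt (fun s => (h s).im) ((h' t).im) t :=
      (Complex.imCLM.hasFDerivAt.comp_hasDerivAt t (hd t ht))
    have := (hre.pow 2).add (him.pow 2)
    refine this.congr_deriv ?_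
    show _ = 2 * ((h t).re * (h' t).re + (h t).im * (h' t).im)
    push_cast
    ring
  have hcF : ContinuousOn F (Ioi 0) := fun x hx => ((hF x hx).continuousAt).continuousWithinAt
  have hcF' : ContinuousOn F' (Ioi 0) := by
    apply ContinuousOn.mul continuousOn_const
    exact ((Complex.continuous_re.comp_continuousOn hch).mul
        (Complex.continuous_re.comp_continuousOn hc')).add
      ((Complex.continuous_im.comp_continuousOn hch).mul
        (Complex.continuous_im.comp_continuousOn hc'))
  -- pointwise bound on |F'|
  have hF'le : ∀ t ∈ Ioo a b, |F' t| ≤ ‖h' t‖^2 * t + ‖h t‖^2 / t^2 * t := by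
    intro t ht
    have ht0 : 0 < t := hsub ht
    have hA : ‖h t‖^2 = (h t).re^2 + (h t).im^2 := (hFnorm t).symm
    have hB : ‖h' t‖^2 = (h' t).re^2 + (h' t).im^2 := by
      rw [Complex.sq_norm, Complex.normSq_apply]; ring
    have hdiv : ‖h t‖^2 / t^2 * t = ‖h t‖^2 / t := by
      field_simp
    have key : |F' t| * t ≤ ((h' t).re^2+(h' t).im^2) * t^2 + ((h t).re^2+(h t).im^2) := by
      rcases abs_cases (F' t) with ⟨he, _⟩ | ⟨he, _⟩ <;> rw [he] <;> simp only [hF'_def] <;>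
        nlinarith [sq_nonneg ((h' t).re * t - (h t).re), sq_nonneg ((h' t).im * t - (h t).im),
          sq_nonneg ((h' t).re * t + (h t).re), sq_nonneg ((h' t).im * t + (h t).im)]
    rw [hdiv, hB, hA,
      show ((h' t).re^2+(h' t).im^2)*t + ((h t).re^2+(h t).im^2)/t
        = (((h' t).re^2+(h' t).im^2)*t^2 + ((h t).re^2+(h t).im^2))/t by field_simp,
      le_div_iff₀ ht0]
    exact key
  -- integrability on the annulus
  set g : ℝ → ℝ := fun t => ‖h' t‖^2 * t + ‖h t‖^2 / t^2 * t with hg_def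
  have hgint : IntegrableOn g (Ioo a b) := by
    have : IntegrableOn (fun t => ‖h' t‖^2 * t + ‖h t‖^2 / t^2 * t) (Ioi 0) := hi1.add hi2
    exact this.mono_set hsub
  have hg2int : IntegrableOn (fun t => ‖h t‖^2 / t^2 * t) (Ioo a b) := hi2.mono_set hsub
  set G : ℝ := ∫ t in Ioo a b, g t with hG_def
  set G2 : ℝ := ∫ t in Ioo a b, ‖h t‖^2 / t^2 * t with hG2_def
  have hG2G : G2 ≤ G := by
    apply setIntegral_mono_on hg2int hgint measurableSet_Ioo
    intro t ht
    have ht0 : 0 < t := hsub ht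
    have : 0 ≤ ‖h' t‖^2 * t := mul_nonneg (sq_nonneg _) ht0.le
    simp only [hg_def]; linarith
  have hG2nonneg : 0 ≤ G2 := by
    apply setIntegral_nonneg measurableSet_Ioo
    intro t ht
    have ht0 : 0 < t := hsub ht
    positivity
  -- the minimum point on the middle interval
  set c : ℝ := (3/2) * a with hc_def
  set d : ℝ := 3 * a with hd_def
  have hcd : c < d := by rw [hc_def, hd_def]; nlinarith
  have hc0 : 0 < c := by rw [hc_def]; nlinarith
  have hKsub : Icc c d ⊆ Ioo a b := by
    apply Icc_subset_Ioo
    · rw [hc_def]; nlinarith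
    · rw [hd_def, hb4]; nlinarith
  obtain ⟨s₀, hs₀K, hmin⟩ := isCompact_Icc.exists_isMinOn ⟨c, left_mem_Icc.2 hcd.le⟩
      (hcF.mono (fun t ht => hsub (hKsub ht)))
  have hs₀ab : s₀ ∈ Ioo a b := hKsub hs₀K
  -- average bound : F s₀ * log 2 ≤ G2
  have havg : F s₀ * Real.log 2 ≤ G2 := by
    have hlog : ∫ t in Ioc c d, F s₀ * t⁻¹ = F s₀ * Real.log 2 := by
      rw [← intervalIntegral.integral_of_le hcd.le, intervalIntegral.integral_const_mul,
        integral_inv_of_pos hc0 (lt_trans hc0 hcd),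
        show d / c = 2 by rw [hc_def, hd_def]; field_simp]
    have hmono : ∫ t in Ioc c d, F s₀ * t⁻¹ ≤ ∫ t in Ioc c d, F t * t⁻¹ := by
      apply setIntegral_mono_on
      · exact (continuousOn_const.mul (continuousOn_inv₀.mono
          (fun t ht => ne_of_gt (lt_of_lt_of_le hc0 ht.1)))).integrableOn_Icc.mono_set
          Ioc_subset_Icc_self
      · exact (((hcF.mono (fun t ht => hsub (hKsub ht))).mul (continuousOn_inv₀.mono
          (fun t ht => ne_of_gt (lt_of_lt_of_le hc0 ht.1)))).integrableOn_Icc).mono_set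
          Ioc_subset_Icc_self
      · exact measurableSet_Ioc
      · intro t ht
        have htK : t ∈ Icc c d := Ioc_subset_Icc_self ht
        have ht0 : 0 < t := lt_of_lt_of_le hc0 htK.1
        exact mul_le_mul_of_nonneg_right (hmin htK) (inv_nonneg.2 ht0.le)
    have hcongr : ∫ t in Ioc c d, F t * t⁻¹ = ∫ t in Ioc c d, ‖h t‖^2 / t^2 * t := by
      apply setIntegral_congr_fun measurableSet_Ioc
      intro t ht
      have ht0 : 0 < t := hc0.trans ht.1
      show F t * t⁻¹ = ‖h t‖^2 / t^2 * t
      rw [hFnorm t]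
      field_simp
    have hext : ∫ t in Ioc c d, ‖h t‖^2 / t^2 * t ≤ G2 := by
      apply setIntegral_mono_set hg2int
      · filter_upwards [ae_restrict_mem measurableSet_Ioo] with t ht
        have ht0 : 0 < t := hsub ht
        positivity
      · exact HasSubset.Subset.eventuallyLE (fun t ht => hKsub (Ioc_subset_Icc_self ht))
    calc F s₀ * Real.log 2 = ∫ t in Ioc c d, F s₀ * t⁻¹ := hlog.symm
      _ ≤ ∫ t in Ioc c d, F t * t⁻¹ := hmono
      _ = ∫ t in Ioc c d, ‖h t‖^2 / t^2 * t := hcongr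
      _ ≤ G2 := hext
  -- FTC bound
  have huIcc : uIcc s₀ r ⊆ Ioo a b := by
    rw [uIcc]
    apply Icc_subset_Ioo
    · exact lt_min hs₀ab.1 hr.1
    · exact max_lt hs₀ab.2 hr.2
  have hftc : ∫ t in s₀..r, F' t = F r - F s₀ := by
    apply intervalIntegral.integral_eq_sub_of_hasDerivAt
    · exact fun t ht => hF t (hsub (huIcc ht))
    · exact (hcF'.mono (fun t ht => hsub (huIcc ht))).intervalIntegrable
  have hIsub : uIoc s₀ r ⊆ Ioo a b := fun t ht => huIcc (Ioc_subset_Icc_self ht)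
  have habs : |∫ t in s₀..r, F' t| ≤ ∫ t in uIoc s₀ r, |F' t| := by
    simpa [Real.norm_eq_abs] using intervalIntegral.norm_integral_le_integral_norm_uIoc
      (f := F') (a := s₀) (b := r) (μ := volume)
  have habs2 : ∫ t in uIoc s₀ r, |F' t| ≤ G := by
    calc ∫ t in uIoc s₀ r, |F' t| ≤ ∫ t in uIoc s₀ r, g t := by
          apply setIntegral_mono_on
          · exact (((hcF'.mono (fun t ht => hsub (huIcc ht))).abs).integrableOn_compact
              isCompact_uIcc).mono_set Ioc_subset_Icc_self
          · exact hgint.mono_set hIsub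
          · exact measurableSet_Ioc
          · exact fun t ht => hF'le t (hIsub ht)
      _ ≤ G := by
          apply setIntegral_mono_set hgint
          · filter_upwards [ae_restrict_mem measurableSet_Ioo] with t ht
            have ht0 : 0 < t := hsub ht
            have h1 : 0 ≤ ‖h' t‖^2 * t := mul_nonneg (sq_nonneg _) ht0.le
            have h2 : 0 ≤ ‖h t‖^2 / t^2 * t := by positivity
            simp only [Pi.zero_apply, hg_def]; linarith
          · exact HasSubset.Subset.eventuallyLE hIsub
  -- combine
  have hFs₀ : F s₀ ≤ 2 * G2 := by
    have hlog2 : (1/2 : ℝ) ≤ Real.log 2 := by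
      linarith [Real.log_two_gt_d9]
    have hFs₀nonneg : 0 ≤ F s₀ := by rw [hFnorm]; positivity
    nlinarith
  have : F r ≤ F s₀ + G := by
    have h1 : |F r - F s₀| ≤ G := by rw [← hftc]; exact habs.trans habs2
    have h0 : F r - F s₀ ≤ |F r - F s₀| := le_abs_self _
    linarith
  rw [← hFnorm r]
  linarith [hG2G, hG2nonneg]

/-- Square-summed dyadic `L^∞` embedding: `‖h‖_{ℓ²L^∞} ≲ ‖h‖_{Ḣ¹_e}` over the dyadic annuli
`A_m = (2^{m−1}, 2^{m+1})`. -/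
theorem dyadic_linf_embedding :
    ∃ C : ℝ, ∀ h h' : ℝ → ℂ,
      (∀ r ∈ Ioi (0:ℝ), HasDerivAt h (h' r) r) →
      ContinuousOn h' (Ioi 0) →
      IntegrableOn (fun r => ‖h' r‖^2 * r) (Ioi 0) →
      IntegrableOn (fun r => ‖h r‖^2 / r^2 * r) (Ioi 0) →
      (∑' m : ℤ, ENNReal.ofReal
          ((sSup ((fun r => ‖h r‖) '' Ioo ((2:ℝ)^(m-1)) ((2:ℝ)^(m+1))))^2))
        ≤ ENNReal.ofReal (C * ((∫ r in Ioi (0:ℝ), ‖h' r‖^2 * r)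
            + ∫ r in Ioi (0:ℝ), ‖h r‖^2 / r^2 * r)) := by
  use 6
  intro h h' hd hc' hi1 hi2
  set g : ℝ → ℝ := fun t => ‖h' t‖^2 * t + ‖h t‖^2 / t^2 * t with hg_def
  have hgint : IntegrableOn g (Ioi 0) := hi1.add hi2
  have hgnn : ∀ t ∈ Ioi (0:ℝ), 0 ≤ g t := by
    intro t ht
    have ht0 : 0 < t := ht
    have h1 : 0 ≤ ‖h' t‖^2 * t := mul_nonneg (sq_nonneg _) ht0.le
    have h2 : 0 ≤ ‖h t‖^2 / t^2 * t := by positivity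
    simp only [hg_def]; linarith
  have hAsub : ∀ m : ℤ, Ioo ((2:ℝ)^(m-1)) ((2:ℝ)^(m+1)) ⊆ Ioi 0 :=
    fun m t ht => lt_trans (zpow_pos two_pos _) ht.1
  have hAne : ∀ m : ℤ, (Ioo ((2:ℝ)^(m-1)) ((2:ℝ)^(m+1))).Nonempty := by
    intro m
    refine nonempty_Ioo.2 ?_
    have h1 : (0:ℝ) < (2:ℝ)^(m-1) := zpow_pos two_pos _
    calc (2:ℝ)^(m-1) < 4 * (2:ℝ)^(m-1) := by linarith
      _ = (2:ℝ)^(m+1) := by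
          rw [show m + 1 = (m - 1) + 2 by ring, zpow_add₀ (two_ne_zero)]; ring
  -- per-annulus bound on the sup
  have hsup : ∀ m : ℤ, ENNReal.ofReal
      ((sSup ((fun r => ‖h r‖) '' Ioo ((2:ℝ)^(m-1)) ((2:ℝ)^(m+1))))^2)
        ≤ 3 * ∫⁻ t in Ioo ((2:ℝ)^(m-1)) ((2:ℝ)^(m+1)), ENNReal.ofReal (g t) := by
    intro m
    set Am : Set ℝ := Ioo ((2:ℝ)^(m-1)) ((2:ℝ)^(m+1)) with hAm_def
    have hGnn : 0 ≤ ∫ t in Am, g t :=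
      setIntegral_nonneg measurableSet_Ioo (fun t ht => hgnn t (hAsub m ht))
    have hbound : ∀ y ∈ (fun r => ‖h r‖) '' Am, y ≤ Real.sqrt (3 * ∫ t in Am, g t) := by
      rintro y ⟨x, hx, rfl⟩
      exact Real.le_sqrt_of_sq_le (annulus_pointwise_bound h h' hd hc' hi1 hi2 m hx)
    have hne : ((fun r => ‖h r‖) '' Am).Nonempty := (hAne m).image _
    have hSle : sSup ((fun r => ‖h r‖) '' Am) ≤ Real.sqrt (3 * ∫ t in Am, g t) :=
      csSup_le hne hbound
    have hS0 : 0 ≤ sSup ((fun r => ‖h r‖) '' Am) := by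
      obtain ⟨y, hy⟩ := hne
      exact le_trans (by rcases hy with ⟨x, _, rfl⟩; exact norm_nonneg _)
        (le_csSup ⟨_, hbound⟩ hy)
    have hsq : (sSup ((fun r => ‖h r‖) '' Am))^2 ≤ 3 * ∫ t in Am, g t := by
      calc (sSup ((fun r => ‖h r‖) '' Am))^2
          ≤ (Real.sqrt (3 * ∫ t in Am, g t))^2 := pow_le_pow_left₀ hS0 hSle 2
        _ = 3 * ∫ t in Am, g t := Real.sq_sqrt (by linarith)
    calc ENNReal.ofReal ((sSup ((fun r => ‖h r‖) '' Am))^2)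
        ≤ ENNReal.ofReal (3 * ∫ t in Am, g t) := ENNReal.ofReal_le_ofReal hsq
      _ = ENNReal.ofReal 3 * ENNReal.ofReal (∫ t in Am, g t) :=
          ENNReal.ofReal_mul (by norm_num)
      _ = 3 * ∫⁻ t in Am, ENNReal.ofReal (g t) := by
          rw [ofReal_integral_eq_lintegral_ofReal (hgint.mono_set (hAsub m))
            ((ae_restrict_iff' measurableSet_Ioo).2 (ae_of_all _ fun t ht => hgnn t (hAsub m ht)))]
          norm_num
          rfl
  -- sum over annuli
  calc ∑' m : ℤ, ENNReal.ofReal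
        ((sSup ((fun r => ‖h r‖) '' Ioo ((2:ℝ)^(m-1)) ((2:ℝ)^(m+1))))^2)
      ≤ ∑' m : ℤ, 3 * ∫⁻ t in Ioo ((2:ℝ)^(m-1)) ((2:ℝ)^(m+1)), ENNReal.ofReal (g t) :=
        ENNReal.tsum_le_tsum hsup
    _ = 3 * ∑' m : ℤ, ∫⁻ t in Ioo ((2:ℝ)^(m-1)) ((2:ℝ)^(m+1)), ENNReal.ofReal (g t) :=
        ENNReal.tsum_mul_left
    _ = 3 * ∫⁻ t, ENNReal.ofReal (g t)
          ∂(Measure.sum (fun m : ℤ => volume.restrict (Ioo ((2:ℝ)^(m-1)) ((2:ℝ)^(m+1))))) := by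
        rw [lintegral_sum_measure]
    _ ≤ 3 * ∫⁻ t, ENNReal.ofReal (g t) ∂((2:ENNReal) • volume.restrict (Ioi (0:ℝ))) := by
        gcongr
        exact annulus_measure_sum
    _ = 3 * (2 * ∫⁻ t in Ioi (0:ℝ), ENNReal.ofReal (g t)) := by
        rw [lintegral_smul_measure, smul_eq_mul]
    _ = 6 * ENNReal.ofReal (∫ t in Ioi (0:ℝ), g t) := by
        rw [← ofReal_integral_eq_lintegral_ofReal hgint
          ((ae_restrict_iff' measurableSet_Ioi).2 (ae_of_all _ hgnn))]
        ring
    _ = ENNReal.ofReal (6 * ((∫ r in Ioi (0:ℝ), ‖h' r‖^2 * r)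
          + ∫ r in Ioi (0:ℝ), ‖h r‖^2 / r^2 * r)) := by
        rw [integral_add hi1 hi2, ENNReal.ofReal_mul (by norm_num : (0:ℝ) ≤ 6)]
        norm_num
end
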